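/- Let the setting be type A_N or type B_N. For each (i,k) ∈ X there exists exactly one path in P_{i,k} whose set of lower corners C_{p,−} is empty (the highest path p⁺_{i,k}); moreover it is the unique path in P_{i,k} containing the point (i,k) in type A, the unique path containing ι(i,k) in type B when i < N, and the unique path containing (2N−1, k−ε) in type B when i = N. -/

import Mathlib

namespace Paper

/-- The ambient setting: type `A N` (with `N ≥ 1`) or type `B N ε`
(with `N ≥ 2` and `0 < ε < 1/2`). -/
inductive Setting where
  | A (N : ℕ)
  | B (N : ℕ) (ε : ℝ)

namespace Setting

/-- The rank `N`. -/
def N : Setting → ℕ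
  | A n => n
  | B n _ => n

/-- Validity of the parameters of the setting. -/
def valid : Setting → Prop
  | A n => 1 ≤ n
  | B n ε => 2 ≤ n ∧ 0 < ε ∧ ε < 1 / 2

end Setting

/-- The numbers `r_i` : in type A all equal `1`; in type B, `r_N = 1` and `r_i = 2` for `i < N`. -/
def rr : Setting → ℕ → ℕ
  | .A _, _ => 1
  | .B n _, j => if j = n then 1 else 2

/-- The set `X` in type `A_N`. -/
def XA (n : ℕ) : Set (ℕ × ℤ) :=
  {ik | 1 ≤ ik.1 ∧ ik.1 ≤ n ∧ ((ik.1 : ℤ) - ik.2) % 2 = 1}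

/-- The set `X` in type `B_N`. -/
def XB (n : ℕ) : Set (ℕ × ℤ) :=
  {ik | (ik.1 = n ∧ ik.2 % 2 = 1) ∨ (1 ≤ ik.1 ∧ ik.1 < n ∧ ik.2 % 2 = 0)}

/-- The set `X ⊆ I × ℤ`. -/
def X : Setting → Set (ℕ × ℤ)
  | .A n => XA n
  | .B n _ => XB n

/-- The set `W = {(i,k) : (i, k - r_i) ∈ X}`. -/
def W (S : Setting) : Set (ℕ × ℤ) :=
  {ik | (ik.1, ik.2 - (rr S ik.1 : ℤ)) ∈ X S}

/-- The `r`-th point of a path (a finite list of points of the plane). -/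
def pt (p : List (ℝ × ℝ)) (r : ℕ) : ℝ × ℝ := p.getD r (0, 0)

/-- The set of paths `𝒫_{i,k}` in type `A_N`. -/
def pathsA (n : ℕ) (i : ℕ) (k : ℤ) : Set (List (ℝ × ℝ)) :=
  {p | p.length = n + 2 ∧
    (∀ r, r < n + 2 → (pt p r).1 = (r : ℝ)) ∧
    (pt p 0).2 = (i : ℝ) + (k : ℝ) ∧
    (pt p (n + 1)).2 = (n : ℝ) + 1 - (i : ℝ) + (k : ℝ) ∧
    (∀ r, r ≤ n → (pt p (r + 1)).2 - (pt p r).2 = 1 ∨ (pt p (r + 1)).2 - (pt p r).2 = -1)}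

/-- The set of paths `𝒫_{N,ℓ}` in type `B_N`. -/
def pathsBspin (n : ℕ) (ε : ℝ) (l : ℤ) : Set (List (ℝ × ℝ)) :=
  {p | p.length = n + 1 ∧
    (if l % 4 = 3 then ∀ r, r < n → (pt p r).1 = 2 * (r : ℝ)
     else ∀ r, r < n → (pt p r).1 = 4 * (n : ℝ) - 2 - 2 * (r : ℝ)) ∧
    (pt p n).1 = 2 * (n : ℝ) - 1 ∧
    (pt p 0).2 = (l : ℝ) + 2 * (n : ℝ) - 1 ∧
    (∀ r, r + 2 ≤ n → (pt p (r + 1)).2 - (pt p r).2 = 2 ∨ (pt p (r + 1)).2 - (pt p r).2 = -2) ∧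
    ((pt p n).2 - (pt p (n - 1)).2 = 1 + ε ∨ (pt p n).2 - (pt p (n - 1)).2 = -(1 + ε))}

/-- The set of paths `𝒫_{i,k}` in type `B_N`. -/
def pathsB (n : ℕ) (ε : ℝ) (i : ℕ) (k : ℤ) : Set (List (ℝ × ℝ)) :=
  if i = n then pathsBspin n ε k
  else {p | ∃ a b : List (ℝ × ℝ),
    a ∈ pathsBspin n ε (k - (2 * (n : ℤ) - 2 * (i : ℤ) - 1)) ∧
    b ∈ pathsBspin n ε (k + (2 * (n : ℤ) - 2 * (i : ℤ) - 1)) ∧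
    p = a ++ b.reverse ∧
    (pt a n).1 = (pt b n).1 ∧ 0 < (pt a n).2 - (pt b n).2}

/-- The set of paths `𝒫_{i,k}`. -/
def P : Setting → ℕ → ℤ → Set (List (ℝ × ℝ))
  | .A n => pathsA n
  | .B n ε => pathsB n ε

/-- The map `ι : X → ℤ × ℤ` of type `B_N`. -/
def iotaB (n : ℕ) (ik : ℕ × ℤ) : ℤ × ℤ :=
  if ik.1 = n then (2 * (n : ℤ) - 1, ik.2)
  else if (2 * (n : ℤ) + ik.2 - 2 * (ik.1 : ℤ)) % 4 = 2 then (2 * (ik.1 : ℤ), ik.2)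
  else (4 * (n : ℤ) - 2 - 2 * (ik.1 : ℤ), ik.2)

/-- The corners of a path: `Cp S p true` is the set `C_{p,+}` of upper corners, and
`Cp S p false` is the set `C_{p,-}` of lower corners. -/
def Cp (S : Setting) (p : List (ℝ × ℝ)) (up : Bool) : Set (ℕ × ℤ) :=
  match S with
  | .A n =>
    {jl | 1 ≤ jl.1 ∧ jl.1 ≤ n ∧
      pt p jl.1 = ((jl.1 : ℝ), (jl.2 : ℝ)) ∧
      (pt p (jl.1 - 1)).2 = (jl.2 : ℝ) + (if up then 1 else -1) ∧
      (pt p (jl.1 + 1)).2 = (jl.2 : ℝ) + (if up then 1 else -1)}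
  | .B n ε =>
    {jl | jl ∈ XB n ∧
      ((∃ r : ℕ, 1 ≤ r ∧ r + 1 < p.length ∧
          pt p r = (((iotaB n jl).1 : ℝ), ((iotaB n jl).2 : ℝ)) ∧
          (iotaB n jl).1 ≠ 0 ∧ (iotaB n jl).1 ≠ 2 * (n : ℤ) - 1 ∧
          (iotaB n jl).1 ≠ 4 * (n : ℤ) - 2 ∧
          (if up then (pt p r).2 < (pt p (r - 1)).2 ∧ (pt p r).2 < (pt p (r + 1)).2
           else (pt p (r - 1)).2 < (pt p r).2 ∧ (pt p (r + 1)).2 < (pt p r).2))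
       ∨ (jl.1 = n ∧
          (if up then (2 * (n : ℝ) - 1, (jl.2 : ℝ) - ε) ∈ p ∧ (2 * (n : ℝ) - 1, (jl.2 : ℝ) + ε) ∉ p
           else (2 * (n : ℝ) - 1, (jl.2 : ℝ) + ε) ∈ p ∧ (2 * (n : ℝ) - 1, (jl.2 : ℝ) - ε) ∉ p)))}

/-- `p'` is obtained from `p` by replacing the point `q` by the point `q'`. -/
def Replace1 (p p' : List (ℝ × ℝ)) (q q' : ℝ × ℝ) : Prop :=
  ∃ r : ℕ, r < p.length ∧ pt p r = q ∧ p'.length = p.length ∧ pt p' r = q' ∧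
    ∀ s, s < p.length → s ≠ r → pt p' s = pt p s

/-- `p'` is obtained from `p` by replacing the point `q1` by `q1'` and the point `q2` by `q2'`. -/
def Replace2 (p p' : List (ℝ × ℝ)) (q1 q1' q2 q2' : ℝ × ℝ) : Prop :=
  ∃ r s : ℕ, r < p.length ∧ s < p.length ∧ r ≠ s ∧ pt p r = q1 ∧ pt p s = q2 ∧
    p'.length = p.length ∧ pt p' r = q1' ∧ pt p' s = q2' ∧
    ∀ u, u < p.length → u ≠ r → u ≠ s → pt p' u = pt p u

/-- The path `p` can be lowered at `(j, l)`: `(j, l - r_j) ∈ C_{p,+}` and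
`(j, l + r_j) ∉ C_{p,+}`. -/
def CanLower (S : Setting) (p : List (ℝ × ℝ)) (j : ℕ) (l : ℤ) : Prop :=
  (j, l - (rr S j : ℤ)) ∈ Cp S p true ∧ (j, l + (rr S j : ℤ)) ∉ Cp S p true

/-- `p'` is the result of the lowering move at `(j,l)` applied to the path `p ∈ 𝒫_{i,k}`;
written `p' = p 𝒜_{j,l}⁻¹`. -/
def LoweredTo (S : Setting) (i : ℕ) (k : ℤ) (j : ℕ) (l : ℤ)
    (p p' : List (ℝ × ℝ)) : Prop :=
  p ∈ P S i k ∧ p' ∈ P S i k ∧ CanLower S p j l ∧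
  (match S with
   | .A _ => Replace1 p p' ((j : ℝ), (l : ℝ) - 1) ((j : ℝ), (l : ℝ) + 1)
   | .B n ε =>
     if j = n then
       Replace1 p p' (2 * (n : ℝ) - 1, (l : ℝ) - 1 - ε) (2 * (n : ℝ) - 1, (l : ℝ) + 1 + ε)
     else if j = n - 1 then
       Replace2 p p'
         (((iotaB n (j, l - 2)).1 : ℝ), (l : ℝ) - 2) (((iotaB n (j, l - 2)).1 : ℝ), (l : ℝ) + 2)
         (2 * (n : ℝ) - 1, (l : ℝ) - 1 + ε) (2 * (n : ℝ) - 1, (l : ℝ) + 1 - ε)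
     else
       Replace1 p p'
         (((iotaB n (j, l - 2)).1 : ℝ), (l : ℝ) - 2) (((iotaB n (j, l - 2)).1 : ℝ), (l : ℝ) + 2))

/-- The path `p` can be raised at `(j,l)`: it is of the form `p' 𝒜_{j,l}⁻¹`. -/
def CanRaise (S : Setting) (i : ℕ) (k : ℤ) (p : List (ℝ × ℝ)) (j : ℕ) (l : ℤ) : Prop :=
  ∃ p', LoweredTo S i k j l p' p

/-- The monomial group `ℳ`, realised as exponent functions: the free abelian group on the
symbols `Y_{i,k}`, `(i,k) ∈ X`, is identified with finitely supported functions `(ℕ × ℤ) → ℤ`,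
written additively. -/
def Y (x : ℕ × ℤ) : (ℕ × ℤ) → ℤ := fun z => if z = x then 1 else 0

noncomputable def ind (s : Prop) : ℤ := @ite ℤ s (Classical.propDecidable s) 1 0

/-- The monomial `m(p)` of a path: `∏ Y_{j,l}` over upper corners times `∏ Y_{j,l}⁻¹`
over lower corners. -/
noncomputable def mon (S : Setting) (p : List (ℝ × ℝ)) : (ℕ × ℤ) → ℤ :=
  fun x => ind (x ∈ Cp S p true) - ind (x ∈ Cp S p false)

/-- The monomials `A_{j,l}`, with the conventions `Y_{0,·} = Y_{N+1,·} = 1`. -/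
def Amon (S : Setting) (j : ℕ) (l : ℤ) : (ℕ × ℤ) → ℤ :=
  match S with
  | .A n =>
      Y (j, l + 1) + Y (j, l - 1) - (if j = 1 then 0 else Y (j - 1, l))
        - (if j = n then 0 else Y (j + 1, l))
  | .B n _ =>
      if j = n then Y (n, l + 1) + Y (n, l - 1) - Y (n - 1, l)
      else if j = n - 1 then
        Y (n - 1, l + 2) + Y (n - 1, l - 2) - (if j = 1 then 0 else Y (n - 2, l))
          - Y (n, l + 1) - Y (n, l - 1)
      else
        Y (j, l + 2) + Y (j, l - 2) - (if j = 1 then 0 else Y (j - 1, l)) - Y (j + 1, l)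

/-- A monomial is dominant iff all its exponents are nonnegative. -/
def Dominant (m : (ℕ × ℤ) → ℤ) : Prop := ∀ x, 0 ≤ m x

/-- A monomial is anti-dominant iff all its exponents are nonpositive. -/
def AntiDominant (m : (ℕ × ℤ) → ℤ) : Prop := ∀ x, m x ≤ 0

/-- `(i',k')` is in snake position with respect to `(i,k)`. -/
def SnakePos : Setting → ℕ × ℤ → ℕ × ℤ → Prop
  | .A _, ik, ik' => |(ik'.1 : ℤ) - (ik.1 : ℤ)| + 2 ≤ ik'.2 - ik.2
  | .B n _, ik, ik' =>
      if ik.1 = n ∧ ik'.1 = n then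
        2 ≤ ik'.2 - ik.2 ∧ (ik'.2 - ik.2) % 4 = 2
      else if ik.1 = n ∨ ik'.1 = n then
        2 * |(ik'.1 : ℤ) - (ik.1 : ℤ)| + 3 ≤ ik'.2 - ik.2 ∧
          (ik'.2 - ik.2) % 4 = (2 * |(ik'.1 : ℤ) - (ik.1 : ℤ)| - 1) % 4
      else
        2 * |(ik'.1 : ℤ) - (ik.1 : ℤ)| + 4 ≤ ik'.2 - ik.2 ∧
          (ik'.2 - ik.2) % 4 = (2 * |(ik'.1 : ℤ) - (ik.1 : ℤ)|) % 4

/-- A snake: a sequence of points of `X`, each in snake position w.r.t. the previous one. -/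
def IsSnake (S : Setting) {T : ℕ} (w : Fin T → ℕ × ℤ) : Prop :=
  (∀ t, w t ∈ X S) ∧
  ∀ (t : Fin T) (h : (t : ℕ) + 1 < T), SnakePos S (w t) (w ⟨(t : ℕ) + 1, h⟩)

/-- `p` is strictly above `p'`. -/
def StrictlyAbove (p p' : List (ℝ × ℝ)) : Prop :=
  ∀ a ∈ p, ∀ b ∈ p', a.1 = b.1 → a.2 < b.2

/-- A tuple of paths is non-overlapping. -/
def NonOverlapping {T : ℕ} (ps : Fin T → List (ℝ × ℝ)) : Prop :=
  ∀ s t : Fin T, s < t → StrictlyAbove (ps s) (ps t)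

/-- The set `𝒫̄` of non-overlapping tuples of paths attached to a snake. -/
def PBar (S : Setting) {T : ℕ} (w : Fin T → ℕ × ℤ) : Set (Fin T → List (ℝ × ℝ)) :=
  {ps | (∀ t, ps t ∈ P S (w t).1 (w t).2) ∧ NonOverlapping ps}

/-- The product `∏_t m(p_t)` of the monomials of a tuple of paths. -/
noncomputable def tmon (S : Setting) {T : ℕ} (ps : Fin T → List (ℝ × ℝ)) : (ℕ × ℤ) → ℤ :=
  ∑ t, mon S (ps t)

/-- Lowering move at `jl` on a tuple of paths: one component is lowered, the others
are unchanged. -/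
def TLoweredTo (S : Setting) {T : ℕ} (w : Fin T → ℕ × ℤ) (jl : ℕ × ℤ)
    (ps ps' : Fin T → List (ℝ × ℝ)) : Prop :=
  ∃ t, LoweredTo S (w t).1 (w t).2 jl.1 jl.2 (ps t) (ps' t) ∧ ∀ s, s ≠ t → ps' s = ps s

/-- Sequences of raising/lowering moves on a single path; the list records, for each move,
whether it was a lowering move (`true`) or a raising move (`false`), and its site. -/
inductive MoveSeq (S : Setting) (i : ℕ) (k : ℤ) :
    List (ℝ × ℝ) → List (ℝ × ℝ) → List (Bool × (ℕ × ℤ)) → Prop where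
  | nil (p : List (ℝ × ℝ)) : MoveSeq S i k p p []
  | lower {p q r : List (ℝ × ℝ)} {jl : ℕ × ℤ} {ms : List (Bool × (ℕ × ℤ))} :
      jl ∈ W S → LoweredTo S i k jl.1 jl.2 p q → MoveSeq S i k q r ms →
      MoveSeq S i k p r ((true, jl) :: ms)
  | raise {p q r : List (ℝ × ℝ)} {jl : ℕ × ℤ} {ms : List (Bool × (ℕ × ℤ))} :
      jl ∈ W S → LoweredTo S i k jl.1 jl.2 q p → MoveSeq S i k q r ms →
      MoveSeq S i k p r ((false, jl) :: ms)

/-- Sequences of raising/lowering moves on tuples of paths, all of whose intermediate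
tuples are non-overlapping. -/
inductive TMoveSeq (S : Setting) {T : ℕ} (w : Fin T → ℕ × ℤ) :
    (Fin T → List (ℝ × ℝ)) → (Fin T → List (ℝ × ℝ)) → List (Bool × (ℕ × ℤ)) → Prop where
  | nil (ps : Fin T → List (ℝ × ℝ)) : TMoveSeq S w ps ps []
  | lower {ps qs rs : Fin T → List (ℝ × ℝ)} {jl : ℕ × ℤ} {ms : List (Bool × (ℕ × ℤ))} :
      jl ∈ W S → TLoweredTo S w jl ps qs → NonOverlapping qs →
      TMoveSeq S w qs rs ms → TMoveSeq S w ps rs ((true, jl) :: ms)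
  | raise {ps qs rs : Fin T → List (ℝ × ℝ)} {jl : ℕ × ℤ} {ms : List (Bool × (ℕ × ℤ))} :
      jl ∈ W S → TLoweredTo S w jl qs ps → NonOverlapping qs →
      TMoveSeq S w qs rs ms → TMoveSeq S w ps rs ((false, jl) :: ms)

/-- Sequences of lowering moves on tuples of paths, all of whose intermediate tuples
are non-overlapping; the list records the sites, in order. -/
inductive TLowerSeq (S : Setting) {T : ℕ} (w : Fin T → ℕ × ℤ) :
    (Fin T → List (ℝ × ℝ)) → (Fin T → List (ℝ × ℝ)) → List (ℕ × ℤ) → Prop where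
  | nil (ps : Fin T → List (ℝ × ℝ)) : TLowerSeq S w ps ps []
  | cons {ps qs rs : Fin T → List (ℝ × ℝ)} {jl : ℕ × ℤ} {ms : List (ℕ × ℤ)} :
      jl ∈ W S → TLoweredTo S w jl ps qs → NonOverlapping qs →
      TLowerSeq S w qs rs ms → TLowerSeq S w ps rs (jl :: ms)

/-- Weak order on paths with the same x-coordinates: `p` is weakly above `p'`. -/
def WeaklyAbove (p p' : List (ℝ × ℝ)) : Prop :=
  p.length = p'.length ∧ ∀ r, r < p.length → (pt p r).2 ≤ (pt p' r).2

/-- `p` is weakly below `p'`. -/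
def WeaklyBelow (p p' : List (ℝ × ℝ)) : Prop :=
  p.length = p'.length ∧ ∀ r, r < p.length → (pt p' r).2 ≤ (pt p r).2

/-- The path `top(p, p')`. -/
def topPath (p p' : List (ℝ × ℝ)) : List (ℝ × ℝ) :=
  List.zipWith (fun a b => (a.1, min a.2 b.2)) p p'

/-- The distinguished point contained in the highest path `p⁺_{i,k}`. -/
def highPoint : Setting → ℕ → ℤ → ℝ × ℝ
  | .A _, i, k => ((i : ℝ), (k : ℝ))
  | .B n ε, i, k =>
      if i = n then (2 * (n : ℝ) - 1, (k : ℝ) - ε)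
      else (((iotaB n (i, k)).1 : ℝ), ((iotaB n (i, k)).2 : ℝ))

/-- The distinguished point contained in the lowest path `p⁻_{i,k}`. -/
def lowPoint : Setting → ℕ → ℤ → ℝ × ℝ
  | .A n, i, k => ((n : ℝ) + 1 - (i : ℝ), (k : ℝ) + (n : ℝ) + 1)
  | .B n ε, i, k =>
      if i = n then (2 * (n : ℝ) - 1, (k : ℝ) + 4 * (n : ℝ) - 2 + ε)
      else (((iotaB n (i, k + 4 * (n : ℤ) - 2)).1 : ℝ),
            ((iotaB n (i, k + 4 * (n : ℤ) - 2)).2 : ℝ))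

/-- The highest path `p⁺_{i,k}` : the path of `𝒫_{i,k}` with no lower corners. -/
noncomputable def highestPath (S : Setting) (i : ℕ) (k : ℤ) : List (ℝ × ℝ) :=
  Classical.epsilon fun p => p ∈ P S i k ∧ Cp S p false = ∅

/-- The lowest path `p⁻_{i,k}` : the path of `𝒫_{i,k}` with no upper corners. -/
noncomputable def lowestPath (S : Setting) (i : ℕ) (k : ℤ) : List (ℝ × ℝ) :=
  Classical.epsilon fun p => p ∈ P S i k ∧ Cp S p true = ∅


section Steps

variable {c : ℝ} {y : ℕ → ℝ}

lemma step_mono (hc : 0 < c) {m : ℕ}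
    (hstep : ∀ r < m, y (r+1) - y r = c ∨ y (r+1) - y r = -c) :
    ∀ r s : ℕ, r ≤ s → s ≤ m → y r - c * ((s : ℝ) - r) ≤ y s := by
  intro r s hrs hsm
  induction s, hrs using Nat.le_induction with
  | base => simp
  | succ s hrs ih =>
    have hs : s < m := by omega
    have := ih (by omega)
    rcases hstep s hs with h | h <;> push_cast <;> nlinarith

lemma step_forced_down (hc : 0 < c) {m : ℕ}
    (hstep : ∀ r < m, y (r+1) - y r = c ∨ y (r+1) - y r = -c)
    (hend : y m = y 0 - c * m) :
    ∀ r ≤ m, y r = y 0 - c * r := by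
  intro r hr
  have h1 := step_mono hc hstep 0 r (by omega) (by omega)
  have h2 := step_mono hc hstep r m hr le_rfl
  push_cast at h1 h2 ⊢
  nlinarith

lemma step_forced_up (hc : 0 < c) {m : ℕ}
    (hstep : ∀ r < m, y (r+1) - y r = c ∨ y (r+1) - y r = -c)
    (hend : y m = y 0 + c * m) :
    ∀ r ≤ m, y r = y 0 + c * r := by
  intro r hr
  have := step_forced_down (y := fun r => -(y r)) hc
    (fun r hr => (hstep r hr).symm.imp (by intro h; beta_reduce; linarith)
      (by intro h; beta_reduce; linarith))
    (by beta_reduce; linarith) r hr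
  beta_reduce at this
  linarith

lemma chain_up (hc : 0 < c) {m : ℕ}
    (hstep : ∀ r < m, y (r+1) - y r = c ∨ y (r+1) - y r = -c)
    (hnomax : ∀ t, 1 ≤ t → t < m → ¬(y (t-1) < y t ∧ y (t+1) < y t)) :
    ∀ r s, r ≤ s → s < m → y (r+1) - y r = c → y (s+1) - y s = c := by
  intro r s hrs hsm hr
  induction s, hrs using Nat.le_induction with
  | base => exact hr
  | succ s hrs ih =>
    have hs : y (s+1) - y s = c := ih (by omega)
    rcases hstep (s+1) hsm with h | h
    · exact h
    · exact absurd ⟨by simpa using by linarith, by linarith⟩ (hnomax (s+1) (by omega) hsm)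

lemma sum_up {m : ℕ} (r s : ℕ) (hrs : r ≤ s) (hsm : s ≤ m)
    (hall : ∀ t, r ≤ t → t < s → y (t+1) - y t = c) :
    y s = y r + c * ((s : ℝ) - r) := by
  induction s, hrs using Nat.le_induction with
  | base => simp
  | succ s hrs ih =>
    have := ih (by omega) (fun t h1 h2 => hall t h1 (by omega))
    have h2 := hall s hrs (by omega)
    push_cast
    linarith

lemma chain_Q (hc : 0 < c) {m : ℕ}
    (hstep : ∀ r < m, y (r+1) - y r = c ∨ y (r+1) - y r = -c)
    (hnomax : ∀ t, 1 ≤ t → t < m → ¬(y (t-1) < y t ∧ y (t+1) < y t)) :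
    ∀ r ≤ m, y r = y 0 - c * r ∨ ∀ s, r ≤ s → s < m → y (s+1) - y s = c := by
  intro r
  induction r with
  | zero => intro _; left; simp
  | succ r ih =>
    intro hrm
    rcases ih (by omega) with h | h
    · rcases hstep r (by omega) with hst | hst
      · right
        intro s hs hsm
        exact chain_up hc hstep hnomax r s (by omega) hsm hst
      · left
        have : y (r+1) = y r - c := by linarith
        rw [this, h]
        push_cast
        ring
    · right
      intro s hs hsm
      exact h s (by omega) hsm

end Steps

/-! ### Generic list/pt lemmas -/

lemma pt_eq_getElem {p : List (ℝ × ℝ)} {r : ℕ} (h : r < p.length) : pt p r = p[r] :=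
  List.getD_eq_getElem p (0,0) h

lemma pt_mem {p : List (ℝ × ℝ)} {r : ℕ} (h : r < p.length) : pt p r ∈ p := by
  rw [pt_eq_getElem h]; exact List.getElem_mem h

lemma mem_pt {p : List (ℝ × ℝ)} {q : ℝ × ℝ} (h : q ∈ p) :
    ∃ r, r < p.length ∧ pt p r = q := by
  obtain ⟨r, hr, rfl⟩ := List.getElem_of_mem h
  exact ⟨r, hr, pt_eq_getElem hr⟩

lemma pt_ofFn {m : ℕ} (f : Fin m → ℝ × ℝ) {r : ℕ} (h : r < m) :
    pt (List.ofFn f) r = f ⟨r, h⟩ := by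
  rw [pt_eq_getElem (by simpa using h), List.getElem_ofFn]

/-! ### Type A -/

/-- The y-coordinates of the highest path in type A. -/
noncomputable def yA (i : ℕ) (k : ℤ) (r : ℕ) : ℝ :=
  if r ≤ i then (i:ℝ) + (k:ℝ) - r else (k:ℝ) + r - i

/-- The highest path in type A. -/
noncomputable def pHighA (n i : ℕ) (k : ℤ) : List (ℝ × ℝ) :=
  List.ofFn (fun r : Fin (n+2) => ((r:ℝ), yA i k r))

lemma pHighA_pt (n i : ℕ) (k : ℤ) {r : ℕ} (h : r < n + 2) :
    pt (pHighA n i k) r = ((r:ℝ), yA i k r) := by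
  rw [pHighA, pt_ofFn _ h]

lemma pHighA_mem (n i : ℕ) (k : ℤ) (hi1 : 1 ≤ i) (hin : i ≤ n) :
    pHighA n i k ∈ pathsA n i k := by
  refine ⟨by simp [pHighA], fun r hr => by rw [pHighA_pt n i k hr], ?_, ?_, ?_⟩
  · rw [pHighA_pt n i k (by omega)]
    simp [yA]
  · rw [pHighA_pt n i k (by omega)]
    simp only [yA]
    rw [if_neg (by omega : ¬ (n + 1 ≤ i))]
    push_cast
    ring
  · intro r hr
    rw [pHighA_pt n i k (by omega), pHighA_pt n i k (by omega)]
    simp only [yA]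
    rcases le_or_gt (r+1) i with h | h
    · right
      rw [if_pos h, if_pos (by omega)]
      push_cast; ring
    · rcases le_or_gt r i with h2 | h2
      · left
        rw [if_neg (by omega), if_pos h2]
        have hri : r = i := by omega
        subst hri
        push_cast; ring
      · left
        rw [if_neg (by omega), if_neg (by omega)]
        push_cast; ring

lemma A_det {n i : ℕ} {k : ℤ} {p : List (ℝ × ℝ)} (hp : p ∈ pathsA n i k)
    (hin : i ≤ n) (hyi : (pt p i).2 = (k:ℝ)) :
    ∀ r < n + 2, (pt p r).2 = yA i k r := by
  obtain ⟨hlen, hx, hy0, hyend, hstep⟩ := hp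
  obtain ⟨y, hyd⟩ : ∃ y : ℕ → ℝ, ∀ r, y r = (pt p r).2 := ⟨_, fun _ => rfl⟩
  have hstep' : ∀ r < n + 1, y (r+1) - y r = 1 ∨ y (r+1) - y r = -1 := by
    intro r hr; rw [hyd, hyd]; exact hstep r (by omega)
  have hdown : ∀ r ≤ i, y r = y 0 - 1 * r := by
    apply step_forced_down one_pos (fun r hr => hstep' r (by omega))
    rw [hyd, hyd, hyi, hy0]; push_cast; ring
  have hup : ∀ s ≤ n + 1 - i, y (i + s) = y i + 1 * s := by
    apply step_forced_up (y := fun s => y (i + s)) one_pos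
    · intro r hr
      show y (i + (r+1)) - y (i + r) = 1 ∨ y (i + (r+1)) - y (i + r) = -1
      rw [show i + (r+1) = i + r + 1 by omega]
      exact hstep' (i + r) (by omega)
    · show y (i + (n + 1 - i)) = y (i + 0) + 1 * ((n + 1 - i : ℕ) : ℝ)
      rw [show i + (n + 1 - i) = n + 1 by omega, show i + 0 = i by omega,
        hyd, hyd, hyend, hyi]
      push_cast [Nat.cast_sub (by omega : i ≤ n + 1)]
      ring
  intro r hr
  rcases le_or_gt r i with h | h
  · have := hdown r h
    rw [hyd, hyd, hy0] at this
    rw [this, yA, if_pos h]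
    push_cast; ring
  · have := hup (r - i) (by omega)
    rw [show i + (r - i) = r by omega, hyd, hyd, hyi] at this
    rw [this, yA, if_neg (by omega)]
    push_cast [Nat.cast_sub (by omega : i ≤ r)]
    ring

lemma A_eq_high {n i : ℕ} {k : ℤ} {p : List (ℝ × ℝ)} (hp : p ∈ pathsA n i k)
    (hin : i ≤ n) (hyi : (pt p i).2 = (k:ℝ)) : p = pHighA n i k := by
  have hdet := A_det hp hin hyi
  have hlen : p.length = n + 2 := hp.1
  have hx := hp.2.1
  apply List.ext_getElem (by simp [pHighA, hlen])
  intro r h1 h2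
  have hr : r < n + 2 := by omega
  have e1 : p[r] = pt p r := (pt_eq_getElem (by omega)).symm
  rw [e1, show (pHighA n i k)[r] = pt (pHighA n i k) r from
    (pt_eq_getElem (by omega)).symm, pHighA_pt n i k hr]
  exact Prod.ext (hx r hr) (hdet r hr)

lemma A_int {n i : ℕ} {k : ℤ} {p : List (ℝ × ℝ)} (hp : p ∈ pathsA n i k) :
    ∀ r ≤ n + 1, ∃ z : ℤ, (pt p r).2 = (z:ℝ) := by
  obtain ⟨hlen, hx, hy0, hyend, hstep⟩ := hp
  intro r
  induction r with
  | zero => exact fun _ => ⟨i + k, by rw [hy0]; push_cast; ring⟩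
  | succ r ih =>
    intro hr
    obtain ⟨z, hz⟩ := ih (by omega)
    rcases hstep r (by omega) with h | h
    · exact ⟨z + 1, by push_cast; linarith⟩
    · exact ⟨z - 1, by push_cast; linarith⟩

lemma A_nomax {n i : ℕ} {k : ℤ} {p : List (ℝ × ℝ)} (hp : p ∈ pathsA n i k)
    (hC : Cp (.A n) p false = ∅) :
    ∀ t, 1 ≤ t → t < n + 1 →
      ¬((pt p (t-1)).2 < (pt p t).2 ∧ (pt p (t+1)).2 < (pt p t).2) := by
  intro t ht1 htn hmax
  obtain ⟨hL, hR⟩ := hmax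
  obtain ⟨z, hz⟩ := A_int hp t (by omega)
  obtain ⟨hlen, hx, hy0, hyend, hstep⟩ := hp
  have hstepL := hstep (t-1) (by omega)
  rw [show t - 1 + 1 = t by omega] at hstepL
  have hstepR := hstep t (by omega)
  have hyL : (pt p (t-1)).2 = (z:ℝ) - 1 := by
    rcases hstepL with h | h
    · rw [hz] at h; linarith
    · exfalso; rw [hz] at hL; rw [hz] at h; linarith
  have hyR : (pt p (t+1)).2 = (z:ℝ) - 1 := by
    rcases hstepR with h | h
    · exfalso; rw [hz] at hR; rw [hz] at h; linarith
    · rw [hz] at h; linarith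
  have hmem : ((t, z) : ℕ × ℤ) ∈ Cp (.A n) p false := by
    show 1 ≤ t ∧ t ≤ n ∧ _
    refine ⟨ht1, by omega, Prod.ext (hx t (by omega)) hz, ?_, ?_⟩
    · show (pt p (t-1)).2 = (z:ℝ) + (if false then 1 else -1)
      rw [if_neg (by simp)]; linarith
    · show (pt p (t+1)).2 = (z:ℝ) + (if false then 1 else -1)
      rw [if_neg (by simp)]; linarith
  rw [hC] at hmem
  exact hmem

lemma A_contains {n i : ℕ} {k : ℤ} {p : List (ℝ × ℝ)} (hp : p ∈ pathsA n i k)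
    (hi1 : 1 ≤ i) (hin : i ≤ n) (hC : Cp (.A n) p false = ∅) :
    ((i:ℝ), (k:ℝ)) ∈ p := by
  have hnomax := A_nomax hp hC
  obtain ⟨hlen, hx, hy0, hyend, hstep⟩ := hp
  obtain ⟨y, hyd⟩ : ∃ y : ℕ → ℝ, ∀ r, y r = (pt p r).2 := ⟨_, fun _ => rfl⟩
  have hstep' : ∀ r < n + 1, y (r+1) - y r = 1 ∨ y (r+1) - y r = -1 := by
    intro r hr; rw [hyd, hyd]; exact hstep r (by omega)
  have hnomax' : ∀ t, 1 ≤ t → t < n + 1 → ¬(y (t-1) < y t ∧ y (t+1) < y t) := by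
    intro t h1 h2; rw [hyd, hyd, hyd]; exact hnomax t h1 h2
  have hyi : y i = (k:ℝ) := by
    rcases chain_Q one_pos hstep' hnomax' i (by omega) with h | h
    · rw [h, hyd, hy0]; push_cast; ring
    · have := sum_up (c := 1) (y := y) (m := n+1) i (n+1) (by omega) le_rfl h
      rw [hyd (n+1), hyend] at this
      push_cast at this
      linarith
  rw [hyd] at hyi
  have hpti : pt p i = ((i:ℝ), (k:ℝ)) := Prod.ext (hx i (by omega)) hyi
  rw [← hpti]
  exact pt_mem (by omega)

lemma A_noCorner {n i : ℕ} {k : ℤ} {p : List (ℝ × ℝ)} (hp : p ∈ pathsA n i k)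
    (hi1 : 1 ≤ i) (hin : i ≤ n) (hyi : (pt p i).2 = (k:ℝ)) :
    Cp (.A n) p false = ∅ := by
  have hdet := A_det hp hin hyi
  ext jl
  obtain ⟨j, l⟩ := jl
  simp only [Set.mem_empty_iff_false, iff_false]
  intro hmem
  obtain ⟨hj1, hjn, hptj, hm1, hp1⟩ :
      1 ≤ j ∧ j ≤ n ∧ pt p j = ((j:ℝ), (l:ℝ)) ∧
      (pt p (j-1)).2 = (l:ℝ) + (if false then 1 else -1) ∧
      (pt p (j+1)).2 = (l:ℝ) + (if false then 1 else -1) := hmem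
  rw [if_neg (by simp)] at hm1 hp1
  have hlj : (l:ℝ) = yA i k j := by
    have := hdet j (by omega)
    rw [hptj] at this
    exact this
  rcases le_or_gt j i with h | h
  · have h1 : (pt p (j-1)).2 = yA i k (j-1) := hdet (j-1) (by omega)
    rw [hm1] at h1
    simp only [yA, if_pos h, if_pos (by omega : j - 1 ≤ i)] at h1 hlj
    rw [hlj] at h1
    push_cast [Nat.cast_sub (by omega : 1 ≤ j)] at h1
    linarith
  · have h1 : (pt p (j+1)).2 = yA i k (j+1) := hdet (j+1) (by omega)
    rw [hp1] at h1
    simp only [yA, if_neg (by omega : ¬ j ≤ i), if_neg (by omega : ¬ j + 1 ≤ i)] at h1 hlj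
    rw [hlj] at h1
    push_cast at h1
    linarith



/-! ### Type B : spin path infrastructure -/

lemma step_antimono {c : ℝ} {y : ℕ → ℝ} (hc : 0 < c) {m : ℕ}
    (hstep : ∀ r < m, y (r+1) - y r = c ∨ y (r+1) - y r = -c) :
    ∀ r s : ℕ, r ≤ s → s ≤ m → y s ≤ y r + c * ((s : ℝ) - r) := by
  intro r s hrs hsm
  have := step_mono (y := fun r => -(y r)) hc
    (fun r hr => ((hstep r hr).symm.imp (by intro h; beta_reduce; linarith)
      (by intro h; beta_reduce; linarith))) r s hrs hsm
  beta_reduce at this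
  linarith

lemma eq_of_pt {p q : List (ℝ × ℝ)} (hl : p.length = q.length)
    (h : ∀ r < p.length, pt p r = pt q r) : p = q := by
  apply List.ext_getElem hl
  intro r h1 h2
  rw [show p[r] = pt p r from (pt_eq_getElem h1).symm,
    show q[r] = pt q r from (pt_eq_getElem h2).symm]
  exact h r h1

/-- Structured version of membership in `pathsBspin`. -/
lemma spin_struct {n : ℕ} {ε : ℝ} {l : ℤ} {p : List (ℝ × ℝ)}
    (hp : p ∈ pathsBspin n ε l) :
    p.length = n + 1 ∧
    (∀ r < n, (pt p r).1 = if l % 4 = 3 then 2*(r:ℝ) else 4*(n:ℝ) - 2 - 2*(r:ℝ)) ∧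
    (pt p n).1 = 2*(n:ℝ) - 1 ∧
    (pt p 0).2 = (l:ℝ) + 2*(n:ℝ) - 1 ∧
    (∀ r, r + 2 ≤ n → (pt p (r+1)).2 - (pt p r).2 = 2 ∨ (pt p (r+1)).2 - (pt p r).2 = -2) ∧
    ((pt p n).2 - (pt p (n-1)).2 = 1 + ε ∨ (pt p n).2 - (pt p (n-1)).2 = -(1+ε)) := by
  obtain ⟨h1, h2, h3, h4, h5, h6⟩ := hp
  refine ⟨h1, ?_, h3, h4, h5, h6⟩
  by_cases h : l % 4 = 3
  · rw [if_pos h] at h2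
    intro r hr
    rw [if_pos h]
    exact h2 r hr
  · rw [if_neg h] at h2
    intro r hr
    rw [if_neg h]
    exact h2 r hr

/-- Integrality and mod-4 tracking along a spin path. -/
lemma spin_int {n : ℕ} {ε : ℝ} {l : ℤ} {p : List (ℝ × ℝ)}
    (hp : p ∈ pathsBspin n ε l) :
    ∀ r ≤ n - 1, ∃ z : ℤ, (pt p r).2 = (z:ℝ) ∧
      (z - (l + 2*(n:ℤ) - 1 + 2*(r:ℤ))) % 4 = 0 := by
  obtain ⟨-, -, -, h4, h5, -⟩ := spin_struct hp
  intro r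
  induction r with
  | zero => exact fun _ => ⟨l + 2*n - 1, by rw [h4]; push_cast; ring, by omega⟩
  | succ r ih =>
    intro hr
    obtain ⟨z, hz, hz4⟩ := ih (by omega)
    rcases h5 r (by omega) with h | h
    · exact ⟨z + 2, by push_cast; linarith, by push_cast at hz4 ⊢; omega⟩
    · exact ⟨z - 2, by push_cast; linarith, by push_cast at hz4 ⊢; omega⟩

/-- The `ι` map on points produced along a leg with odd parameter `l`. -/
lemma iotaB_spec {n j : ℕ} {z l : ℤ} (hjn : j ≠ n)
    (hz4 : (z - (l + 2*(n:ℤ) - 1 + 2*(j:ℤ))) % 4 = 0) :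
    iotaB n (j, z) = ((if l % 4 = 3 then 2*(j:ℤ) else 4*(n:ℤ) - 2 - 2*(j:ℤ)), z) := by
  simp only [iotaB, if_neg hjn]
  by_cases h3 : l % 4 = 3
  · rw [if_pos (by omega), if_pos h3]
  · rw [if_neg (by omega), if_neg h3]

/-- The highest spin path. -/
noncomputable def pHighBspin (n : ℕ) (ε : ℝ) (k : ℤ) : List (ℝ × ℝ) :=
  List.ofFn (fun r : Fin (n+1) =>
    if (r:ℕ) = n then (2*(n:ℝ) - 1, (k:ℝ) - ε)
    else ((if k % 4 = 3 then 2*(r:ℝ) else 4*(n:ℝ) - 2 - 2*(r:ℝ)),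
      (k:ℝ) + 2*(n:ℝ) - 1 - 2*(r:ℝ)))

lemma pHighBspin_pt {n : ℕ} (ε : ℝ) (k : ℤ) {r : ℕ} (h : r < n + 1) :
    pt (pHighBspin n ε k) r =
      if r = n then (2*(n:ℝ) - 1, (k:ℝ) - ε)
      else ((if k % 4 = 3 then 2*(r:ℝ) else 4*(n:ℝ) - 2 - 2*(r:ℝ)),
        (k:ℝ) + 2*(n:ℝ) - 1 - 2*(r:ℝ)) := by
  rw [pHighBspin, pt_ofFn _ h]

lemma pHighBspin_mem {n : ℕ} {ε : ℝ} (hn : 2 ≤ n) (k : ℤ) :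
    pHighBspin n ε k ∈ pathsBspin n ε k := by
  refine ⟨by simp [pHighBspin], ?_, ?_, ?_, ?_, ?_⟩
  · by_cases h3 : k % 4 = 3
    · rw [if_pos h3]
      intro r hr
      rw [pHighBspin_pt ε k (by omega), if_neg (by omega), if_pos h3]
    · rw [if_neg h3]
      intro r hr
      rw [pHighBspin_pt ε k (by omega), if_neg (by omega), if_neg h3]
  · rw [pHighBspin_pt ε k (by omega), if_pos rfl]
  · rw [pHighBspin_pt ε k (by omega), if_neg (by omega)]
    simp
  · intro r hr
    rw [pHighBspin_pt ε k (by omega : r + 1 < n + 1),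
      pHighBspin_pt ε k (by omega : r < n + 1),
      if_neg (show ¬ (r + 1 = n) by omega), if_neg (show ¬ (r = n) by omega)]
    right
    dsimp only
    push_cast
    ring
  · rw [pHighBspin_pt ε k (by omega : n < n + 1),
      pHighBspin_pt ε k (by omega : n - 1 < n + 1),
      if_pos rfl, if_neg (show ¬ (n - 1 = n) by omega)]
    right
    dsimp only
    push_cast [Nat.cast_sub (by omega : 1 ≤ n)]
    ring

/-! ### Type B, spin node `i = N` -/

lemma spin_x_cases {n : ℕ} {ε : ℝ} {l : ℤ} {p : List (ℝ × ℝ)}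
    (hp : p ∈ pathsBspin n ε l) {q : ℝ × ℝ} (hq : q ∈ p)
    (hx : q.1 = 2*(n:ℝ) - 1) : q = pt p n := by
  obtain ⟨hlen, hxi, hxn, -, -, -⟩ := spin_struct hp
  obtain ⟨r, hrlen, hr⟩ := mem_pt hq
  rw [hlen] at hrlen
  rcases Nat.lt_or_ge r n with h | h
  · exfalso
    have hxr := hxi r h
    rw [← hr] at hx
    rw [hx] at hxr
    by_cases h3 : l % 4 = 3
    · rw [if_pos h3] at hxr
      have : 2 * (n:ℤ) - 1 = 2 * r := by exact_mod_cast hxr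
      omega
    · rw [if_neg h3] at hxr
      have : 2 * (n:ℤ) - 1 = 4 * n - 2 - 2 * r := by exact_mod_cast hxr
      omega
  · have hrn : r = n := by omega
    rw [← hr, hrn]

lemma Bn_det {n : ℕ} {ε : ℝ} {k : ℤ} {p : List (ℝ × ℝ)} (hn : 2 ≤ n)
    (hε : 0 < ε) (hp : p ∈ pathsBspin n ε k)
    (hmem : (2*(n:ℝ) - 1, (k:ℝ) - ε) ∈ p) :
    (∀ r ≤ n - 1, (pt p r).2 = (k:ℝ) + 2*(n:ℝ) - 1 - 2*(r:ℝ)) ∧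
    (pt p n).2 = (k:ℝ) - ε := by
  obtain ⟨hlen, hxi, hxn, hy0, hstep, hlast⟩ := spin_struct hp
  have hrn := spin_x_cases hp hmem rfl
  have hyn : (pt p n).2 = (k:ℝ) - ε := by rw [← hrn]
  refine ⟨?_, hyn⟩
  obtain ⟨y, hyd⟩ : ∃ y : ℕ → ℝ, ∀ r, y r = (pt p r).2 := ⟨_, fun _ => rfl⟩
  have hstep' : ∀ r < n - 1, y (r+1) - y r = 2 ∨ y (r+1) - y r = -2 := by
    intro r hrr; rw [hyd, hyd]; exact hstep r (by omega)
  have hm := step_mono (c := 2) (by norm_num) hstep' 0 (n-1) (by omega) le_rfl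
  have hc1 : ((n - 1 : ℕ) : ℝ) = (n : ℝ) - 1 := by
    push_cast [Nat.cast_sub (by omega : 1 ≤ n)]; ring
  have hy0v : y 0 = (k:ℝ) + 2*(n:ℝ) - 1 := by rw [hyd]; exact hy0
  rw [hc1, hy0v] at hm
  have hyn1 : y (n-1) = (pt p (n-1)).2 := hyd (n-1)
  have hend : y (n-1) = y 0 - 2 * ((n-1 : ℕ) : ℝ) := by
    rcases hlast with h | h
    · exfalso
      rw [← hyn1, hyn] at h
      push_cast at hm
      linarith
    · rw [← hyn1, hyn] at h
      rw [hy0v, hc1]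
      push_cast at hm
      linarith
  have hall := step_forced_down (c := 2) (by norm_num) hstep' hend
  intro r hr
  have hv := hall r hr
  rw [hyd, hy0v] at hv
  rw [hv]

lemma Bn_noCorner {n : ℕ} {ε : ℝ} {k : ℤ} {p : List (ℝ × ℝ)} (hn : 2 ≤ n)
    (hε : 0 < ε) (hε2 : ε < 1/2) (hp : p ∈ pathsBspin n ε k)
    (hmem : (2*(n:ℝ) - 1, (k:ℝ) - ε) ∈ p) :
    Cp (.B n ε) p false = ∅ := by
  obtain ⟨hdet, hyn⟩ := Bn_det hn hε hp hmem
  obtain ⟨hlen, hxi, hxn, hy0, hstep, hlast⟩ := spin_struct hp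
  ext jl
  obtain ⟨j, l'⟩ := jl
  simp only [Set.mem_empty_iff_false, iff_false]
  rintro ⟨hXB, ⟨r, hr1, hrl, hpt, h0, h1, h2, hcmp⟩ | ⟨hjn, hsp⟩⟩
  · obtain ⟨hlow, hhigh⟩ : (pt p (r-1)).2 < (pt p r).2 ∧ (pt p (r+1)).2 < (pt p r).2 := hcmp
    rw [hlen] at hrl
    have e1 := hdet (r-1) (by omega)
    have e2 := hdet r (by omega)
    rw [e1, e2] at hlow
    have hc1 : ((r - 1 : ℕ) : ℝ) = (r:ℝ) - 1 := by
      push_cast [Nat.cast_sub (by omega : 1 ≤ r)]; ring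
    rw [hc1] at hlow
    linarith
  · obtain ⟨hin, hout⟩ : (2*(n:ℝ) - 1, (l':ℝ) + ε) ∈ p ∧ (2*(n:ℝ) - 1, (l':ℝ) - ε) ∉ p := hsp
    have heq := spin_x_cases hp hin rfl
    have hv : (l' : ℝ) + ε = (k:ℝ) - ε := by
      have h2' := congrArg Prod.snd heq
      dsimp only at h2'
      rw [hyn] at h2'
      exact h2'
    have hgt : (0:ℤ) < k - l' := by
      have : (0:ℝ) < ((k - l' : ℤ):ℝ) := by push_cast; linarith
      exact_mod_cast this
    have hlt : (k - l' : ℤ) < 1 := by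
      have : ((k - l' : ℤ):ℝ) < 1 := by push_cast; linarith
      exact_mod_cast this
    omega

lemma Bn_contains {n : ℕ} {ε : ℝ} {k : ℤ} {p : List (ℝ × ℝ)} (hn : 2 ≤ n)
    (hε : 0 < ε) (hε2 : ε < 1/2) (hk : k % 2 = 1) (hp : p ∈ pathsBspin n ε k)
    (hC : Cp (.B n ε) p false = ∅) :
    (2*(n:ℝ) - 1, (k:ℝ) - ε) ∈ p := by
  obtain ⟨hlen, hxi, hxn, hy0, hstep, hlast⟩ := spin_struct hp
  have hint := spin_int hp
  obtain ⟨y, hyd⟩ : ∃ y : ℕ → ℝ, ∀ r, y r = (pt p r).2 := ⟨_, fun _ => rfl⟩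
  have hstep' : ∀ r < n - 1, y (r+1) - y r = 2 ∨ y (r+1) - y r = -2 := by
    intro r hrr; rw [hyd, hyd]; exact hstep r (by omega)
  have hnomax : ∀ t, 1 ≤ t → t ≤ n - 1 → ¬(y (t-1) < y t ∧ y (t+1) < y t) := by
    intro t ht1 htn hmax
    obtain ⟨z, hz, hz4⟩ := hint t (by omega)
    have hXB : ((t, z) : ℕ × ℤ) ∈ XB n := Or.inr ⟨ht1, by omega, by omega⟩
    have hiota := iotaB_spec (n := n) (j := t) (z := z) (by omega) hz4
    have hcmem : ((t, z) : ℕ × ℤ) ∈ Cp (.B n ε) p false := by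
      refine ⟨hXB, Or.inl ⟨t, ht1, by rw [hlen]; omega, ?_, ?_, ?_, ?_, ?_⟩⟩
      · rw [hiota]
        refine Prod.ext ?_ ?_
        · dsimp only
          rw [hxi t (by omega)]
          by_cases h3 : k % 4 = 3
          · rw [if_pos h3, if_pos h3]; push_cast; ring
          · rw [if_neg h3, if_neg h3]; push_cast; ring
        · dsimp only
          exact hz
      · rw [hiota]
        dsimp only
        by_cases h3 : k % 4 = 3
        · rw [if_pos h3]; omega
        · rw [if_neg h3]; omega
      · rw [hiota]
        dsimp only
        by_cases h3 : k % 4 = 3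
        · rw [if_pos h3]; intro hcon; omega
        · rw [if_neg h3]; intro hcon; omega
      · rw [hiota]
        dsimp only
        by_cases h3 : k % 4 = 3
        · rw [if_pos h3]; intro hcon; omega
        · rw [if_neg h3]; intro hcon; omega
      · show (pt p (t-1)).2 < (pt p t).2 ∧ (pt p (t+1)).2 < (pt p t).2
        rw [← hyd, ← hyd, ← hyd]
        exact hmax
    rw [hC] at hcmem
    exact hcmem
  have hlast' : (pt p n).2 - (pt p (n-1)).2 = -(1+ε) := by
    rcases hlast with h | h
    · exfalso
      obtain ⟨z, hz, hz4⟩ := hint (n-1) (by omega)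
      have hynv : (pt p n).2 = ((z + 1 : ℤ):ℝ) + ε := by
        rw [hz] at h; push_cast; linarith
      have hXB : ((n, z+1) : ℕ × ℤ) ∈ XB n := Or.inl ⟨rfl, by omega⟩
      have hcmem : ((n, z+1) : ℕ × ℤ) ∈ Cp (.B n ε) p false := by
        refine ⟨hXB, Or.inr ⟨rfl, ?_⟩⟩
        show (2*(n:ℝ) - 1, ((z+1 : ℤ):ℝ) + ε) ∈ p ∧ (2*(n:ℝ) - 1, ((z+1 : ℤ):ℝ) - ε) ∉ p
        constructor
        · have heq : (2*(n:ℝ) - 1, ((z+1:ℤ):ℝ) + ε) = pt p n := (Prod.ext hxn hynv).symm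
          rw [heq]
          exact pt_mem (by rw [hlen]; omega)
        · intro hinp
          have heq := spin_x_cases hp hinp rfl
          have h2 := congrArg Prod.snd heq
          dsimp only at h2
          rw [hynv] at h2
          linarith
      rw [hC] at hcmem
      exact hcmem
    · exact h
  have hdown : ∀ r < n - 1, y (r+1) - y r = -2 := by
    intro r hr
    by_contra hne
    have hup : y (r+1) - y r = 2 := by rcases hstep' r hr with h | h; exact h; exact absurd h hne
    have hchain := chain_up (c := 2) (by norm_num) hstep'
      (fun t h1 h2 => hnomax t h1 (by omega)) r (n-2) (by omega) (by omega) hup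
    rw [show n - 2 + 1 = n - 1 by omega] at hchain
    refine hnomax (n-1) (by omega) le_rfl ⟨?_, ?_⟩
    · rw [show n-1-1 = n-2 by omega]; linarith
    · rw [show n-1+1 = n by omega, hyd, hyd]; linarith
  have hvals := sum_up (c := -2) (y := y) (m := n-1) 0 (n-1) (by omega) le_rfl
    (fun t h1 h2 => hdown t h2)
  have hyn1 : (pt p (n-1)).2 = (k:ℝ) + 1 := by
    rw [← hyd, hvals, hyd, hy0]
    push_cast [Nat.cast_sub (by omega : 1 ≤ n)]
    ring
  have hynv : (pt p n).2 = (k:ℝ) - ε := by rw [hyn1] at hlast'; linarith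
  have heq : pt p n = (2*(n:ℝ) - 1, (k:ℝ) - ε) := Prod.ext hxn hynv
  rw [← heq]
  exact pt_mem (by rw [hlen]; omega)

lemma Bn_eq_high {n : ℕ} {ε : ℝ} {k : ℤ} {p : List (ℝ × ℝ)} (hn : 2 ≤ n)
    (hε : 0 < ε) (hp : p ∈ pathsBspin n ε k)
    (hmem : (2*(n:ℝ) - 1, (k:ℝ) - ε) ∈ p) : p = pHighBspin n ε k := by
  obtain ⟨hdet, hyn⟩ := Bn_det hn hε hp hmem
  obtain ⟨hlen, hxi, hxn, hy0, hstep, hlast⟩ := spin_struct hp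
  apply eq_of_pt (by simp [pHighBspin, hlen])
  intro r hr
  rw [hlen] at hr
  rw [pHighBspin_pt ε k hr]
  rcases Nat.lt_or_ge r n with h | h
  · rw [if_neg (by omega)]
    refine Prod.ext ?_ ?_
    · exact hxi r h
    · dsimp only
      rw [hdet r (by omega)]
  · have hrn : r = n := by omega
    subst hrn
    rw [if_pos rfl]
    exact Prod.ext hxn hyn

lemma Bn_highmem {n : ℕ} (ε : ℝ) (k : ℤ) (hn : 2 ≤ n) :
    (2*(n:ℝ) - 1, (k:ℝ) - ε) ∈ pHighBspin n ε k := by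
  have h : pt (pHighBspin n ε k) n = (2*(n:ℝ) - 1, (k:ℝ) - ε) := by
    rw [pHighBspin_pt ε k (by omega), if_pos rfl]
  rw [← h]
  exact pt_mem (by simp [pHighBspin])

/-! ### Type B, non-spin nodes `i < N` -/

lemma pt_append_left {a b : List (ℝ × ℝ)} {r : ℕ} (h : r < a.length) :
    pt (a ++ b) r = pt a r := by
  rw [pt, pt, List.getD_eq_getElem _ _ (by rw [List.length_append]; omega),
    List.getD_eq_getElem _ _ h, List.getElem_append_left]

lemma concat_length {a b : List (ℝ × ℝ)} {n : ℕ} (ha : a.length = n+1)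
    (hb : b.length = n+1) : (a ++ b.reverse).length = 2*n+2 := by
  rw [List.length_append, List.length_reverse, ha, hb]; omega

lemma pt_concat_right {a b : List (ℝ × ℝ)} {n s : ℕ} (ha : a.length = n+1)
    (hb : b.length = n+1) (h : s ≤ n) :
    pt (a ++ b.reverse) (n+1+s) = pt b (n-s) := by
  rw [pt, pt, List.getD_eq_getElem _ _ (by rw [concat_length ha hb]; omega),
    List.getD_eq_getElem _ _ (by rw [hb]; omega),
    List.getElem_append_right (by rw [ha]; omega)]
  rw [List.getElem_reverse]
  congr 1
  omega

/-- The `la` parameter of the left leg. -/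
def laZ (n i : ℕ) (k : ℤ) : ℤ := k - (2*(n:ℤ) - 2*(i:ℤ) - 1)

/-- The `lb` parameter of the right leg. -/
def lbZ (n i : ℕ) (k : ℤ) : ℤ := k + (2*(n:ℤ) - 2*(i:ℤ) - 1)

lemma iotaB_ik {n i : ℕ} {k : ℤ} (hin : i ≠ n) :
    iotaB n (i, k) =
      ((if laZ n i k % 4 = 3 then 2*(i:ℤ) else 4*(n:ℤ) - 2 - 2*(i:ℤ)), k) :=
  iotaB_spec hin (l := laZ n i k) (by simp [laZ]; omega)

/-- The y-values of the highest left leg. -/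
noncomputable def yABv (i : ℕ) (k : ℤ) (r : ℕ) : ℝ :=
  if r ≤ i then (k:ℝ) + 2*(i:ℝ) - 2*(r:ℝ) else (k:ℝ) + 2*(r:ℝ) - 2*(i:ℝ)

/-- The highest left leg. -/
noncomputable def legAHigh (n i : ℕ) (ε : ℝ) (k : ℤ) : List (ℝ × ℝ) :=
  List.ofFn (fun r : Fin (n+1) =>
    if (r:ℕ) = n then (2*(n:ℝ) - 1, (k:ℝ) + 2*(n:ℝ) - 2*(i:ℝ) - 1 + ε)
    else ((if laZ n i k % 4 = 3 then 2*((r:ℕ):ℝ) else 4*(n:ℝ) - 2 - 2*((r:ℕ):ℝ)),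
      yABv i k (r:ℕ)))

lemma legAHigh_pt {n i : ℕ} (ε : ℝ) (k : ℤ) {r : ℕ} (h : r < n + 1) :
    pt (legAHigh n i ε k) r =
      if r = n then (2*(n:ℝ) - 1, (k:ℝ) + 2*(n:ℝ) - 2*(i:ℝ) - 1 + ε)
      else ((if laZ n i k % 4 = 3 then 2*(r:ℝ) else 4*(n:ℝ) - 2 - 2*(r:ℝ)),
        yABv i k r) := by
  rw [legAHigh, pt_ofFn _ h]

lemma legAHigh_mem {n i : ℕ} {ε : ℝ} {k : ℤ} (hi1 : 1 ≤ i) (hin : i < n) :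
    legAHigh n i ε k ∈ pathsBspin n ε (laZ n i k) := by
  refine ⟨by simp [legAHigh], ?_, ?_, ?_, ?_, ?_⟩
  · by_cases h3 : laZ n i k % 4 = 3
    · rw [if_pos h3]
      intro r hr
      rw [legAHigh_pt ε k (by omega), if_neg (by omega), if_pos h3]
    · rw [if_neg h3]
      intro r hr
      rw [legAHigh_pt ε k (by omega), if_neg (by omega), if_neg h3]
  · rw [legAHigh_pt ε k (by omega), if_pos rfl]
  · rw [legAHigh_pt ε k (by omega), if_neg (by omega)]
    dsimp only
    rw [yABv, if_pos (by omega)]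
    simp only [laZ]
    push_cast
    ring
  · intro r hr
    rw [legAHigh_pt ε k (by omega : r + 1 < n + 1),
      legAHigh_pt ε k (by omega : r < n + 1),
      if_neg (show ¬ (r + 1 = n) by omega), if_neg (show ¬ (r = n) by omega)]
    dsimp only
    rcases le_or_gt (r+1) i with h | h
    · right
      rw [yABv, yABv, if_pos h, if_pos (by omega)]
      push_cast; ring
    · rcases le_or_gt r i with h2 | h2
      · left
        have hri : r = i := by omega
        subst hri
        rw [yABv, yABv, if_neg (by omega), if_pos h2]
        push_cast; ring
      · left
        rw [yABv, yABv, if_neg (by omega), if_neg (by omega)]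
        push_cast; ring
  · rw [legAHigh_pt ε k (by omega : n < n + 1),
      legAHigh_pt ε k (by omega : n - 1 < n + 1),
      if_pos rfl, if_neg (show ¬ (n - 1 = n) by omega)]
    left
    dsimp only
    rcases Nat.lt_or_ge i (n-1) with h | h
    · rw [yABv, if_neg (by omega)]
      push_cast [Nat.cast_sub (show 1 ≤ n by omega)]
      ring
    · have hi : i = n - 1 := by omega
      rw [yABv, if_pos (by omega), hi]
      push_cast [Nat.cast_sub (show 1 ≤ n by omega)]
      ring

/-- The highest path at a non-spin node. -/
noncomputable def pHighBi (n i : ℕ) (ε : ℝ) (k : ℤ) : List (ℝ × ℝ) :=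
  legAHigh n i ε k ++ (pHighBspin n ε (lbZ n i k)).reverse

lemma pHighBi_mem {n i : ℕ} {ε : ℝ} {k : ℤ} (hn : 2 ≤ n) (hi1 : 1 ≤ i)
    (hin : i < n) (hε : 0 < ε) :
    pHighBi n i ε k ∈ pathsB n ε i k := by
  rw [pathsB, if_neg (by omega : ¬ i = n)]
  refine ⟨legAHigh n i ε k, pHighBspin n ε (lbZ n i k),
    legAHigh_mem hi1 hin, pHighBspin_mem hn _, rfl, ?_, ?_⟩
  · rw [legAHigh_pt ε k (by omega), if_pos rfl,
      pHighBspin_pt ε _ (by omega), if_pos rfl]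
  · rw [legAHigh_pt ε k (by omega), if_pos rfl,
      pHighBspin_pt ε _ (by omega), if_pos rfl]
    dsimp only
    simp only [lbZ]
    push_cast
    linarith

lemma Bi_x_mid {n i : ℕ} {ε : ℝ} {k : ℤ} {a b : List (ℝ × ℝ)}
    (ha : a ∈ pathsBspin n ε (laZ n i k)) (hb : b ∈ pathsBspin n ε (lbZ n i k))
    {q : ℝ × ℝ} (hq : q ∈ a ++ b.reverse) (hx : q.1 = 2*(n:ℝ) - 1) :
    q = pt a n ∨ q = pt b n := by
  obtain ⟨ha1, hax, haxn, -, -, -⟩ := spin_struct ha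
  obtain ⟨hb1, hbx, hbxn, -, -, -⟩ := spin_struct hb
  obtain ⟨r, hr, hrq⟩ := mem_pt hq
  rw [concat_length ha1 hb1] at hr
  rcases Nat.lt_or_ge r (n+1) with h | h
  · have hpa : pt (a ++ b.reverse) r = pt a r := pt_append_left (by omega)
    rw [hpa] at hrq
    rcases Nat.lt_or_ge r n with h2 | h2
    · exfalso
      have hxv := hax r h2
      rw [hrq, hx] at hxv
      by_cases h3 : laZ n i k % 4 = 3
      · rw [if_pos h3] at hxv
        have : 2*(n:ℤ) - 1 = 2*r := by exact_mod_cast hxv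
        omega
      · rw [if_neg h3] at hxv
        have : 2*(n:ℤ) - 1 = 4*n - 2 - 2*r := by exact_mod_cast hxv
        omega
    · left
      rw [← hrq]
      congr 1
      omega
  · have hpb : pt (a ++ b.reverse) r = pt b (n-(r-(n+1))) := by
      have hcc := pt_concat_right (s := r - (n+1)) ha1 hb1 (by omega)
      rw [show n+1+(r-(n+1)) = r by omega] at hcc
      exact hcc
    rw [hpb] at hrq
    rcases Nat.eq_or_lt_of_le h with h2 | h2
    · right
      rw [← hrq]
      congr 1
      omega
    · exfalso
      have ht : n - (r-(n+1)) < n := by omega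
      have hxv := hbx _ ht
      rw [hrq, hx] at hxv
      by_cases h3 : lbZ n i k % 4 = 3
      · rw [if_pos h3] at hxv
        have : 2*(n:ℤ) - 1 = 2*((n - (r-(n+1)) : ℕ) : ℤ) := by exact_mod_cast hxv
        omega
      · rw [if_neg h3] at hxv
        have : 2*(n:ℤ) - 1 = 4*n - 2 - 2*((n - (r-(n+1)) : ℕ) : ℤ) := by exact_mod_cast hxv
        omega

lemma Bi_index {n i : ℕ} {ε : ℝ} {k : ℤ} {a b : List (ℝ × ℝ)}
    (hi1 : 1 ≤ i) (hin : i < n) (hk : k % 2 = 0)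
    (ha : a ∈ pathsBspin n ε (laZ n i k)) (hb : b ∈ pathsBspin n ε (lbZ n i k))
    {q : ℝ × ℝ} (hq : q ∈ a ++ b.reverse)
    (hx : q.1 = (((if laZ n i k % 4 = 3 then 2*(i:ℤ) else 4*(n:ℤ) - 2 - 2*(i:ℤ)) : ℤ) : ℝ)) :
    q = pt a i := by
  obtain ⟨ha1, hax, haxn, -, -, -⟩ := spin_struct ha
  obtain ⟨hb1, hbx, hbxn, -, -, -⟩ := spin_struct hb
  have hmod : ¬ (lbZ n i k % 4 = 3) ↔ laZ n i k % 4 = 3 := by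
    simp only [laZ, lbZ]; omega
  obtain ⟨r, hr, hrq⟩ := mem_pt hq
  rw [concat_length ha1 hb1] at hr
  rcases Nat.lt_or_ge r (n+1) with h | h
  · have hpa : pt (a ++ b.reverse) r = pt a r := pt_append_left (by omega)
    rw [hpa] at hrq
    rcases Nat.lt_or_ge r n with h2 | h2
    · have hxv := hax r h2
      rw [hrq, hx] at hxv
      have hri : r = i := by
        by_cases h3 : laZ n i k % 4 = 3
        · rw [if_pos h3, if_pos h3] at hxv
          have : 2*(i:ℤ) = 2*(r:ℤ) := by exact_mod_cast hxv
          omega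
        · rw [if_neg h3, if_neg h3] at hxv
          have : 4*(n:ℤ) - 2 - 2*i = 4*n - 2 - 2*r := by exact_mod_cast hxv
          omega
      rw [← hrq, hri]
    · exfalso
      have hrn : r = n := by omega
      rw [hrn] at hrq
      rw [hrq, hx] at haxn
      by_cases h3 : laZ n i k % 4 = 3
      · rw [if_pos h3] at haxn
        have : 2*(i:ℤ) = 2*n - 1 := by exact_mod_cast haxn
        omega
      · rw [if_neg h3] at haxn
        have : 4*(n:ℤ) - 2 - 2*i = 2*n - 1 := by exact_mod_cast haxn
        omega
  · exfalso
    have hpb : pt (a ++ b.reverse) r = pt b (n-(r-(n+1))) := by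
      have hcc := pt_concat_right (s := r - (n+1)) ha1 hb1 (by omega)
      rw [show n+1+(r-(n+1)) = r by omega] at hcc
      exact hcc
    rw [hpb] at hrq
    rcases Nat.eq_or_lt_of_le h with h2 | h2
    · rw [show n - (r-(n+1)) = n by omega] at hrq
      rw [hrq, hx] at hbxn
      by_cases h3 : laZ n i k % 4 = 3
      · rw [if_pos h3] at hbxn
        have : 2*(i:ℤ) = 2*n - 1 := by exact_mod_cast hbxn
        omega
      · rw [if_neg h3] at hbxn
        have : 4*(n:ℤ) - 2 - 2*i = 2*n - 1 := by exact_mod_cast hbxn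
        omega
    · have ht : n - (r-(n+1)) < n := by omega
      have hxv := hbx _ ht
      rw [hrq, hx] at hxv
      by_cases h3 : laZ n i k % 4 = 3
      · rw [if_pos h3, if_neg (by rw [hmod]; exact h3)] at hxv
        have : 2*(i:ℤ) = 4*n - 2 - 2*((n - (r-(n+1)) : ℕ) : ℤ) := by exact_mod_cast hxv
        omega
      · rw [if_neg h3, if_pos (by by_contra hc; exact h3 (hmod.mp hc))] at hxv
        have : 4*(n:ℤ) - 2 - 2*i = 2*((n - (r-(n+1)) : ℕ) : ℤ) := by exact_mod_cast hxv
        have hb2 : (i:ℤ) < n := by exact_mod_cast hin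
        omega

lemma Bi_det {n i : ℕ} {ε : ℝ} {k : ℤ} {a b : List (ℝ × ℝ)}
    (hn : 2 ≤ n) (hi1 : 1 ≤ i) (hin : i < n) (hε : 0 < ε) (hε2 : ε < 1/2)
    (ha : a ∈ pathsBspin n ε (laZ n i k)) (hb : b ∈ pathsBspin n ε (lbZ n i k))
    (hab : 0 < (pt a n).2 - (pt b n).2)
    (hyi : (pt a i).2 = (k:ℝ)) :
    (∀ r ≤ n-1, (pt a r).2 = yABv i k r) ∧
    (pt a n).2 = (k:ℝ) + 2*(n:ℝ) - 2*(i:ℝ) - 1 + ε ∧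
    (∀ t ≤ n-1, (pt b t).2 = (k:ℝ) + 4*(n:ℝ) - 2*(i:ℝ) - 2 - 2*(t:ℝ)) ∧
    (pt b n).2 = (k:ℝ) + 2*(n:ℝ) - 2*(i:ℝ) - 1 - ε := by
  obtain ⟨ha1, hax, haxn, hay0, hastep, halast⟩ := spin_struct ha
  obtain ⟨hb1, hbx, hbxn, hby0, hbstep, hblast⟩ := spin_struct hb
  obtain ⟨ya, hyda⟩ : ∃ y : ℕ → ℝ, ∀ r, y r = (pt a r).2 := ⟨_, fun _ => rfl⟩
  obtain ⟨yb, hydb⟩ : ∃ y : ℕ → ℝ, ∀ r, y r = (pt b r).2 := ⟨_, fun _ => rfl⟩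
  have hstepa : ∀ r < n - 1, ya (r+1) - ya r = 2 ∨ ya (r+1) - ya r = -2 := by
    intro r hrr; rw [hyda, hyda]; exact hastep r (by omega)
  have hstepb : ∀ r < n - 1, yb (r+1) - yb r = 2 ∨ yb (r+1) - yb r = -2 := by
    intro r hrr; rw [hydb, hydb]; exact hbstep r (by omega)
  have hya0 : ya 0 = (k:ℝ) + 2*(i:ℝ) := by
    rw [hyda, hay0]; simp only [laZ]; push_cast; ring
  have hyb0 : yb 0 = (k:ℝ) + 4*(n:ℝ) - 2*(i:ℝ) - 2 := by
    rw [hydb, hby0]; simp only [lbZ]; push_cast; ring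
  have hyai : ya i = (k:ℝ) := by rw [hyda]; exact hyi
  -- the descending start of the a leg
  have hdowna : ∀ r ≤ i, ya r = ya 0 - 2 * (r:ℝ) := by
    apply step_forced_down (by norm_num) (fun r hr => hstepa r (by omega))
    rw [hyai, hya0]; push_cast; ring
  -- bounds
  have hanti := step_antimono (c := 2) (by norm_num) hstepa i (n-1) (by omega) le_rfl
  have hmonb := step_mono (c := 2) (by norm_num) hstepb 0 (n-1) (by omega) le_rfl
  obtain ⟨za, hza, hza4⟩ := spin_int ha (n-1) le_rfl
  obtain ⟨zb, hzb, hzb4⟩ := spin_int hb (n-1) le_rfl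
  rw [← hyda] at hza
  rw [← hydb] at hzb
  have hcast : ((n - 1 : ℕ) : ℝ) = (n:ℝ) - 1 := by
    push_cast [Nat.cast_sub (show 1 ≤ n by omega)]; ring
  have hA1 : (za:ℝ) ≤ (k:ℝ) + 2*(n:ℝ) - 2 - 2*(i:ℝ) := by
    rw [hcast, hyai] at hanti
    rw [← hza]
    linarith
  have hA2 : (zb:ℝ) ≥ (k:ℝ) + 2*(n:ℝ) - 2*(i:ℝ) := by
    rw [hcast, hyb0] at hmonb
    rw [← hzb]
    push_cast at hmonb
    linarith
  have hA1' : za ≤ k + 2*n - 2 - 2*i := by exact_mod_cast hA1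
  have hA2' : zb ≥ k + 2*n - 2*i := by exact_mod_cast hA2
  rw [← hyda n, ← hyda (n-1), hza] at halast
  rw [← hydb n, ← hydb (n-1), hzb] at hblast
  have haby : 0 < ya n - yb n := by rw [hyda, hydb]; exact hab
  rcases halast with hA | hA <;> rcases hblast with hB | hB
  · exfalso
    have h1 : ya n = (za:ℝ) + 1 + ε := by linarith
    have h2 : yb n = (zb:ℝ) + 1 + ε := by linarith
    push_cast at h1 h2
    have : ((za:ℝ)) ≤ (zb:ℝ) - 2 := by exact_mod_cast (show za ≤ zb - 2 by omega)
    linarith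
  · -- good case: a-last up, b-last down
    have h1 : ya n = (za:ℝ) + 1 + ε := by linarith
    have h2 : yb n = (zb:ℝ) - 1 - ε := by linarith
    have hgt : (za:ℝ) - zb > -3 := by linarith
    have hgt' : za - zb > -3 := by exact_mod_cast hgt
    have hzaeq : za = k + 2*n - 2 - 2*i ∧ zb = k + 2*n - 2*i := by omega
    obtain ⟨hzav, hzbv⟩ := hzaeq
    -- forced ascent of the a-leg after i
    have hupa : ∀ s ≤ n - 1 - i, ya (i + s) = ya i + 2 * (s:ℝ) := by
      apply step_forced_up (y := fun s => ya (i + s)) (by norm_num)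
      · intro r hr
        show ya (i + (r+1)) - ya (i + r) = 2 ∨ ya (i + (r+1)) - ya (i + r) = -2
        rw [show i + (r+1) = (i + r) + 1 by omega]
        exact hstepa (i + r) (by omega)
      · show ya (i + (n - 1 - i)) = ya (i + 0) + 2 * ((n - 1 - i : ℕ) : ℝ)
        rw [show i + (n - 1 - i) = n - 1 by omega, show i + 0 = i by omega,
          hza, hyai, hzav]
        push_cast [Nat.cast_sub (show i ≤ n - 1 by omega),
          Nat.cast_sub (show 1 ≤ n by omega)]
        ring
    -- forced descent of the b-leg
    have hdownb : ∀ t ≤ n - 1, yb t = yb 0 - 2 * (t:ℝ) := by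
      apply step_forced_down (by norm_num) hstepb
      rw [hzb, hyb0, hzbv, hcast]
      push_cast
      ring
    refine ⟨?_, ?_, ?_, ?_⟩
    · intro r hr
      rw [← hyda r]
      rcases le_or_gt r i with h | h
      · rw [hdowna r h, hya0, yABv, if_pos h]
      · have := hupa (r - i) (by omega)
        rw [show i + (r - i) = r by omega, hyai] at this
        rw [this, yABv, if_neg (by omega)]
        push_cast [Nat.cast_sub (show i ≤ r by omega)]
        ring
    · rw [← hyda n, h1, hzav]
      push_cast
      ring
    · intro t ht
      rw [← hydb t, hdownb t ht, hyb0]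
    · rw [← hydb n, h2, hzbv]
      push_cast
      ring
  · exfalso
    have h1 : ya n = (za:ℝ) - 1 - ε := by linarith
    have h2 : yb n = (zb:ℝ) + 1 + ε := by linarith
    have : ((za:ℝ)) ≤ (zb:ℝ) - 2 := by exact_mod_cast (show za ≤ zb - 2 by omega)
    linarith
  · exfalso
    have h1 : ya n = (za:ℝ) - 1 - ε := by linarith
    have h2 : yb n = (zb:ℝ) - 1 - ε := by linarith
    have : ((za:ℝ)) ≤ (zb:ℝ) - 2 := by exact_mod_cast (show za ≤ zb - 2 by omega)
    linarith

lemma Bi_struct {n i : ℕ} {ε : ℝ} {k : ℤ} {p : List (ℝ × ℝ)} (hin : ¬ i = n)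
    (hp : p ∈ pathsB n ε i k) :
    ∃ a b, a ∈ pathsBspin n ε (laZ n i k) ∧ b ∈ pathsBspin n ε (lbZ n i k) ∧
      p = a ++ b.reverse ∧ 0 < (pt a n).2 - (pt b n).2 := by
  rw [pathsB, if_neg hin] at hp
  obtain ⟨a, b, ha, hb, hpe, -, hab⟩ := hp
  exact ⟨a, b, ha, hb, hpe, hab⟩

lemma legAHigh_len {n i : ℕ} {ε : ℝ} {k : ℤ} : (legAHigh n i ε k).length = n + 1 := by
  simp [legAHigh]

lemma pHighBspin_len {n : ℕ} {ε : ℝ} {k : ℤ} : (pHighBspin n ε k).length = n + 1 := by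
  simp [pHighBspin]

lemma Bi_eq_high {n i : ℕ} {ε : ℝ} {k : ℤ} {a b : List (ℝ × ℝ)}
    (hn : 2 ≤ n) (hi1 : 1 ≤ i) (hin : i < n) (hε : 0 < ε) (hε2 : ε < 1/2)
    (ha : a ∈ pathsBspin n ε (laZ n i k)) (hb : b ∈ pathsBspin n ε (lbZ n i k))
    (hab : 0 < (pt a n).2 - (pt b n).2)
    (hyi : (pt a i).2 = (k:ℝ)) :
    a ++ b.reverse = pHighBi n i ε k := by
  obtain ⟨hda, hyan, hdb, hybn⟩ := Bi_det hn hi1 hin hε hε2 ha hb hab hyi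
  obtain ⟨ha1, hax, haxn, -, -, -⟩ := spin_struct ha
  obtain ⟨hb1, hbx, hbxn, -, -, -⟩ := spin_struct hb
  apply eq_of_pt
  · rw [concat_length ha1 hb1, pHighBi,
      concat_length legAHigh_len pHighBspin_len]
  intro r hr
  rw [concat_length ha1 hb1] at hr
  rcases Nat.lt_or_ge r (n+1) with h | h
  · rw [pt_append_left (by omega), pHighBi,
      pt_append_left (by rw [legAHigh_len]; omega), legAHigh_pt ε k (by omega)]
    rcases Nat.lt_or_ge r n with h2 | h2
    · rw [if_neg (by omega)]
      refine Prod.ext (hax r h2) ?_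
      dsimp only
      rw [hda r (by omega)]
    · have hrn : r = n := by omega
      subst hrn
      rw [if_pos rfl]
      exact Prod.ext haxn (by dsimp only; rw [hyan])
  · have h1 := pt_concat_right (s := r-(n+1)) ha1 hb1 (by omega)
    rw [show n+1+(r-(n+1)) = r by omega] at h1
    have h2 := pt_concat_right (s := r-(n+1)) (a := legAHigh n i ε k)
      (b := pHighBspin n ε (lbZ n i k)) legAHigh_len pHighBspin_len (by omega)
    rw [show n+1+(r-(n+1)) = r by omega] at h2
    rw [h1, pHighBi, h2, pHighBspin_pt _ _ (by omega)]
    rcases Nat.eq_or_lt_of_le h with h3 | h3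
    · rw [show n - (r-(n+1)) = n by omega, if_pos rfl]
      refine Prod.ext hbxn ?_
      dsimp only
      rw [hybn]
      simp only [lbZ]
      push_cast
      ring
    · have ht : n - (r-(n+1)) ≤ n - 1 := by omega
      rw [if_neg (by omega)]
      refine Prod.ext (hbx _ (by omega)) ?_
      dsimp only
      rw [hdb _ ht]
      simp only [lbZ]
      push_cast
      ring

lemma Bi_noCorner {n i : ℕ} {ε : ℝ} {k : ℤ} {a b : List (ℝ × ℝ)}
    (hn : 2 ≤ n) (hi1 : 1 ≤ i) (hin : i < n) (hε : 0 < ε) (hε2 : ε < 1/2)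
    (ha : a ∈ pathsBspin n ε (laZ n i k)) (hb : b ∈ pathsBspin n ε (lbZ n i k))
    (hab : 0 < (pt a n).2 - (pt b n).2)
    (hyi : (pt a i).2 = (k:ℝ)) :
    Cp (.B n ε) (a ++ b.reverse) false = ∅ := by
  obtain ⟨hda, hyan, hdb, hybn⟩ := Bi_det hn hi1 hin hε hε2 ha hb hab hyi
  obtain ⟨ha1, hax, haxn, -, -, -⟩ := spin_struct ha
  obtain ⟨hb1, hbx, hbxn, -, -, -⟩ := spin_struct hb
  have hpa : ∀ r, r ≤ n → pt (a ++ b.reverse) r = pt a r := by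
    intro r h
    exact pt_append_left (by omega)
  have hpb : ∀ s, s ≤ n → pt (a ++ b.reverse) (n+1+s) = pt b (n-s) :=
    fun s h => pt_concat_right ha1 hb1 h
  ext jl
  obtain ⟨j, l'⟩ := jl
  simp only [Set.mem_empty_iff_false, iff_false]
  rintro ⟨hXB, ⟨r, hr1, hrl, hpt, h0, h1, h2, hcmp⟩ | ⟨hjn, hsp⟩⟩
  · obtain ⟨hlow, hhigh⟩ :
        (pt (a ++ b.reverse) (r-1)).2 < (pt (a ++ b.reverse) r).2 ∧
        (pt (a ++ b.reverse) (r+1)).2 < (pt (a ++ b.reverse) r).2 := hcmp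
    rw [concat_length ha1 hb1] at hrl
    have hrn : r ≠ n := by
      intro hrr
      rw [hrr, hpa n le_rfl] at hpt
      have := congrArg Prod.fst hpt
      rw [haxn] at this
      dsimp only at this
      exact h1 (by exact_mod_cast this.symm)
    have hrn1 : r ≠ n + 1 := by
      intro hrr
      have hb0 := hpb 0 (by omega)
      rw [show n + 1 + 0 = n + 1 by omega, show n - 0 = n by omega] at hb0
      rw [hrr, hb0] at hpt
      have := congrArg Prod.fst hpt
      rw [hbxn] at this
      dsimp only at this
      exact h1 (by exact_mod_cast this.symm)
    rcases Nat.lt_or_ge r (n+1) with h | h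
    · -- r ≤ n - 1, on the a-leg
      have hr9 : r ≤ n - 1 := by omega
      rcases le_or_gt r i with hri | hri
      · -- refute using the left neighbour
        rw [hpa (r-1) (by omega), hpa r (by omega), hda (r-1) (by omega),
          hda r hr9, yABv, yABv, if_pos (by omega : r - 1 ≤ i), if_pos hri] at hlow
        have hc : ((r - 1 : ℕ):ℝ) = (r:ℝ) - 1 := by
          push_cast [Nat.cast_sub (show 1 ≤ r by omega)]; ring
        rw [hc] at hlow
        linarith
      · rw [hpa (r+1) (by omega), hpa r (by omega), hda r hr9] at hhigh
        rcases Nat.lt_or_ge (r+1) n with h4 | h4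
        · rw [hda (r+1) (by omega), yABv, yABv, if_neg (by omega), if_neg (by omega)] at hhigh
          push_cast at hhigh
          linarith
        · have : r + 1 = n := by omega
          rw [this, hyan, yABv, if_neg (by omega)] at hhigh
          have hc : (r:ℝ) = (n:ℝ) - 1 := by
            rw [show r = n - 1 by omega]
            push_cast [Nat.cast_sub (show 1 ≤ n by omega)]; ring
          rw [hc] at hhigh
          linarith
    · -- on the b-leg, r ≥ n+2
      have hs1 : 1 ≤ r - (n+1) := by omega
      have hs2 : r - (n+1) ≤ n - 1 := by omega
      have e1 := hpb (r - (n+1)) (by omega)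
      rw [show n+1+(r-(n+1)) = r by omega] at e1
      have e2 := hpb (r - (n+1) + 1) (by omega)
      rw [show n+1+(r-(n+1)+1) = r+1 by omega] at e2
      rw [e1, e2, hdb _ (by omega : n - (r-(n+1)) ≤ n - 1),
        hdb _ (by omega : n - (r-(n+1)+1) ≤ n - 1)] at hhigh
      have hc : ((n - (r-(n+1)+1) : ℕ):ℝ) = ((n - (r-(n+1)) : ℕ):ℝ) - 1 := by
        push_cast [Nat.cast_sub (show r-(n+1)+1 ≤ n by omega),
          Nat.cast_sub (show r-(n+1) ≤ n by omega)]
        ring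
      rw [hc] at hhigh
      linarith
  · obtain ⟨hmemin, hmemout⟩ :
        (2*(n:ℝ) - 1, (l':ℝ) + ε) ∈ a ++ b.reverse ∧
        (2*(n:ℝ) - 1, (l':ℝ) - ε) ∉ a ++ b.reverse := hsp
    rcases Bi_x_mid ha hb hmemin rfl with hqa | hqb
    · have hv := congrArg Prod.snd hqa
      dsimp only at hv
      rw [hyan] at hv
      -- l' = k + 2n - 2i - 1, so (2n-1, l'-ε) = pt b n ∈ p
      apply hmemout
      have hq : (2*(n:ℝ) - 1, (l':ℝ) - ε) = pt b n := by
        refine (Prod.ext hbxn ?_).symm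
        rw [hybn]
        dsimp only
        linarith
      rw [hq]
      have := hpb 0 (by omega)
      rw [show n + 1 + 0 = n + 1 by omega, show n - 0 = n by omega] at this
      rw [← this]
      exact pt_mem (by rw [concat_length ha1 hb1]; omega)
    · have hv := congrArg Prod.snd hqb
      dsimp only at hv
      rw [hybn] at hv
      -- l' + ε = k + 2n - 2i - 1 - ε : impossible
      have hgt : (0:ℤ) < k + 2*n - 2*i - 1 - l' := by
        have : (0:ℝ) < ((k + 2*n - 2*i - 1 - l' : ℤ):ℝ) := by push_cast; linarith
        exact_mod_cast this
      have hlt : k + 2*n - 2*i - 1 - l' < 1 := by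
        have : ((k + 2*n - 2*i - 1 - l' : ℤ):ℝ) < 1 := by push_cast; linarith
        exact_mod_cast this
      omega

lemma Bi_contains {n i : ℕ} {ε : ℝ} {k : ℤ} {a b : List (ℝ × ℝ)}
    (hn : 2 ≤ n) (hi1 : 1 ≤ i) (hin : i < n) (hε : 0 < ε) (hε2 : ε < 1/2)
    (hk : k % 2 = 0)
    (ha : a ∈ pathsBspin n ε (laZ n i k)) (hb : b ∈ pathsBspin n ε (lbZ n i k))
    (hab : 0 < (pt a n).2 - (pt b n).2)
    (hC : Cp (.B n ε) (a ++ b.reverse) false = ∅) :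
    (pt a i).2 = (k:ℝ) := by
  obtain ⟨ha1, hax, haxn, hay0, hastep, halast⟩ := spin_struct ha
  obtain ⟨hb1, hbx, hbxn, hby0, hbstep, hblast⟩ := spin_struct hb
  have hla : laZ n i k % 2 = 1 := by simp only [laZ]; omega
  have hlb : lbZ n i k % 2 = 1 := by simp only [lbZ]; omega
  obtain ⟨ya, hyda⟩ : ∃ y : ℕ → ℝ, ∀ r, y r = (pt a r).2 := ⟨_, fun _ => rfl⟩
  obtain ⟨yb, hydb⟩ : ∃ y : ℕ → ℝ, ∀ r, y r = (pt b r).2 := ⟨_, fun _ => rfl⟩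
  have hstepa : ∀ r < n - 1, ya (r+1) - ya r = 2 ∨ ya (r+1) - ya r = -2 := by
    intro r hrr; rw [hyda, hyda]; exact hastep r (by omega)
  have hstepb : ∀ r < n - 1, yb (r+1) - yb r = 2 ∨ yb (r+1) - yb r = -2 := by
    intro r hrr; rw [hydb, hydb]; exact hbstep r (by omega)
  have hya0 : ya 0 = (k:ℝ) + 2*(i:ℝ) := by
    rw [hyda, hay0]; simp only [laZ]; push_cast; ring
  have hyb0 : yb 0 = (k:ℝ) + 4*(n:ℝ) - 2*(i:ℝ) - 2 := by
    rw [hydb, hby0]; simp only [lbZ]; push_cast; ring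
  have hlen2 : (a ++ b.reverse).length = 2*n+2 := concat_length ha1 hb1
  have hpa : ∀ r, r ≤ n → pt (a ++ b.reverse) r = pt a r := by
    intro r h
    exact pt_append_left (by omega)
  have hpb : ∀ s, s ≤ n → pt (a ++ b.reverse) (n+1+s) = pt b (n-s) :=
    fun s h => pt_concat_right ha1 hb1 h
  have hpbn : pt (a ++ b.reverse) (n+1) = pt b n := by
    have e := hpb 0 (by omega)
    rw [show n+1+0 = n+1 by omega, show n-0 = n by omega] at e
    exact e
  -- no interior local maxima on the a-leg
  have nomax_a : ∀ t, 1 ≤ t → t ≤ n-1 → ¬(ya (t-1) < ya t ∧ ya (t+1) < ya t) := by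
    intro t h1t h2t hmax
    obtain ⟨z, hz, hz4⟩ := spin_int ha t (by omega)
    have hiota := iotaB_spec (show t ≠ n by omega) hz4
    have hcmem : ((t, z) : ℕ × ℤ) ∈ Cp (.B n ε) (a ++ b.reverse) false := by
      refine ⟨Or.inr ⟨h1t, by omega, by omega⟩,
        Or.inl ⟨t, h1t, by rw [hlen2]; omega, ?_, ?_, ?_, ?_, ?_⟩⟩
      · rw [hiota, hpa t (by omega)]
        refine Prod.ext ?_ (by dsimp only; exact hz)
        dsimp only
        rw [hax t (by omega)]
        by_cases h3 : laZ n i k % 4 = 3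
        · rw [if_pos h3, if_pos h3]; push_cast; ring
        · rw [if_neg h3, if_neg h3]; push_cast; ring
      · rw [hiota]
        dsimp only
        by_cases h3 : laZ n i k % 4 = 3
        · rw [if_pos h3]; omega
        · rw [if_neg h3]; omega
      · rw [hiota]
        dsimp only
        by_cases h3 : laZ n i k % 4 = 3
        · rw [if_pos h3]; omega
        · rw [if_neg h3]; omega
      · rw [hiota]
        dsimp only
        by_cases h3 : laZ n i k % 4 = 3
        · rw [if_pos h3]; omega
        · rw [if_neg h3]; omega
      · show (pt (a ++ b.reverse) (t-1)).2 < (pt (a ++ b.reverse) t).2 ∧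
          (pt (a ++ b.reverse) (t+1)).2 < (pt (a ++ b.reverse) t).2
        rw [hpa (t-1) (by omega), hpa t (by omega), hpa (t+1) (by omega),
          ← hyda, ← hyda, ← hyda]
        exact hmax
    rw [hC] at hcmem
    exact hcmem
  -- no interior local maxima on the b-leg
  have nomax_b : ∀ t, 1 ≤ t → t ≤ n-1 → ¬(yb (t-1) < yb t ∧ yb (t+1) < yb t) := by
    intro t h1t h2t hmax
    obtain ⟨z, hz, hz4⟩ := spin_int hb t (by omega)
    have hiota := iotaB_spec (show t ≠ n by omega) hz4
    have e0 := hpb (n-t) (by omega)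
    rw [show n-(n-t) = t by omega] at e0
    have em := hpb (n-t-1) (by omega)
    rw [show n-(n-t-1) = t+1 by omega] at em
    have ep := hpb (n-t+1) (by omega)
    rw [show n-(n-t+1) = t-1 by omega] at ep
    have hcmem : ((t, z) : ℕ × ℤ) ∈ Cp (.B n ε) (a ++ b.reverse) false := by
      refine ⟨Or.inr ⟨h1t, by omega, by omega⟩,
        Or.inl ⟨n+1+(n-t), by omega, by rw [hlen2]; omega, ?_, ?_, ?_, ?_, ?_⟩⟩
      · rw [hiota, e0]
        refine Prod.ext ?_ (by dsimp only; exact hz)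
        dsimp only
        rw [hbx t (by omega)]
        by_cases h3 : lbZ n i k % 4 = 3
        · rw [if_pos h3, if_pos h3]; push_cast; ring
        · rw [if_neg h3, if_neg h3]; push_cast; ring
      · rw [hiota]
        dsimp only
        by_cases h3 : lbZ n i k % 4 = 3
        · rw [if_pos h3]; omega
        · rw [if_neg h3]; omega
      · rw [hiota]
        dsimp only
        by_cases h3 : lbZ n i k % 4 = 3
        · rw [if_pos h3]; omega
        · rw [if_neg h3]; omega
      · rw [hiota]
        dsimp only
        by_cases h3 : lbZ n i k % 4 = 3
        · rw [if_pos h3]; omega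
        · rw [if_neg h3]; omega
      · show (pt (a ++ b.reverse) (n+1+(n-t)-1)).2 < (pt (a ++ b.reverse) (n+1+(n-t))).2 ∧
          (pt (a ++ b.reverse) (n+1+(n-t)+1)).2 < (pt (a ++ b.reverse) (n+1+(n-t))).2
        rw [show n+1+(n-t)-1 = n+1+(n-t-1) by omega,
          show n+1+(n-t)+1 = n+1+(n-t+1) by omega, e0, em, ep,
          ← hydb, ← hydb, ← hydb]
        exact ⟨hmax.2, hmax.1⟩
    rw [hC] at hcmem
    exact hcmem
  -- the last step of the b-leg goes down
  have hblast' : yb n - yb (n-1) = -(1+ε) := by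
    rw [hydb, hydb]
    rcases hblast with hB | hB
    · exfalso
      obtain ⟨z, hz, hz4⟩ := spin_int hb (n-1) le_rfl
      have hynb : (pt b n).2 = ((z+1:ℤ):ℝ) + ε := by
        rw [hz] at hB; push_cast; linarith
      have hcmem : ((n, z+1) : ℕ × ℤ) ∈ Cp (.B n ε) (a ++ b.reverse) false := by
        refine ⟨Or.inl ⟨rfl, by omega⟩, Or.inr ⟨rfl, ?_⟩⟩
        show (2*(n:ℝ) - 1, ((z+1:ℤ):ℝ) + ε) ∈ a ++ b.reverse ∧
          (2*(n:ℝ) - 1, ((z+1:ℤ):ℝ) - ε) ∉ a ++ b.reverse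
        constructor
        · have heq : (2*(n:ℝ)-1, ((z+1:ℤ):ℝ)+ε) = pt b n := (Prod.ext hbxn hynb).symm
          rw [heq, ← hpbn]
          exact pt_mem (by rw [hlen2]; omega)
        · intro hmem
          rcases Bi_x_mid ha hb hmem rfl with hq | hq
          · have hv := congrArg Prod.snd hq
            dsimp only at hv
            rw [hynb] at hab
            rw [← hv] at hab
            linarith
          · have hv := congrArg Prod.snd hq
            dsimp only at hv
            rw [hynb] at hv
            linarith
      rw [hC] at hcmem
      exact hcmem
    · exact hB
  -- the b-leg descends all the way
  have hdownb : ∀ r < n-1, yb (r+1) - yb r = -2 := by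
    intro r hr
    by_contra hne
    have hup : yb (r+1) - yb r = 2 := by
      rcases hstepb r hr with h | h
      · exact h
      · exact absurd h hne
    have hchain := chain_up (c := 2) (by norm_num) hstepb
      (fun t ht1 ht2 => nomax_b t ht1 (by omega)) r (n-2) (by omega) (by omega) hup
    rw [show n-2+1 = n-1 by omega] at hchain
    refine nomax_b (n-1) (by omega) le_rfl ⟨?_, ?_⟩
    · rw [show n-1-1 = n-2 by omega]; linarith
    · rw [show n-1+1 = n by omega]; linarith
  have hybn1 : yb (n-1) = (k:ℝ) + 2*(n:ℝ) - 2*(i:ℝ) := by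
    have hs := sum_up (c := -2) (y := yb) (m := n-1) 0 (n-1) (by omega) le_rfl
      (fun t _ h2 => hdownb t h2)
    rw [hyb0] at hs
    rw [hs]
    push_cast [Nat.cast_sub (show 1 ≤ n by omega)]
    ring
  have hybnv : yb n = (k:ℝ) + 2*(n:ℝ) - 2*(i:ℝ) - 1 - ε := by
    rw [hybn1] at hblast'
    linarith
  -- the last step of the a-leg goes up
  have halast' : ya n - ya (n-1) = 1 + ε := by
    rw [hyda, hyda]
    rcases halast with hA | hA
    · exact hA
    · exfalso
      have hdowna : ∀ r < n-1, ya (r+1) - ya r = -2 := by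
        intro r hr
        by_contra hne
        have hup : ya (r+1) - ya r = 2 := by
          rcases hstepa r hr with h | h
          · exact h
          · exact absurd h hne
        have hchain := chain_up (c := 2) (by norm_num) hstepa
          (fun t ht1 ht2 => nomax_a t ht1 (by omega)) r (n-2) (by omega) (by omega) hup
        rw [show n-2+1 = n-1 by omega] at hchain
        refine nomax_a (n-1) (by omega) le_rfl ⟨?_, ?_⟩
        · rw [show n-1-1 = n-2 by omega]; linarith
        · rw [show n-1+1 = n by omega, hyda, hyda]; linarith
      have hyan1 : ya (n-1) = (k:ℝ) + 2*(i:ℝ) - 2*(n:ℝ) + 2 := by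
        have hs := sum_up (c := -2) (y := ya) (m := n-1) 0 (n-1) (by omega) le_rfl
          (fun t _ h2 => hdowna t h2)
        rw [hya0] at hs
        rw [hs]
        push_cast [Nat.cast_sub (show 1 ≤ n by omega)]
        ring
      have hyanv : ya n = (k:ℝ) + 2*(i:ℝ) - 2*(n:ℝ) + 1 - ε := by
        rw [← hyda n, ← hyda (n-1)] at hA
        linarith
      rw [← hyda n, ← hydb n] at hab
      rw [hyanv, hybnv] at hab
      have hri : 4*(n:ℝ) - 2 < 4*(i:ℝ) := by linarith
      have hii : 4*(n:ℤ) - 2 < 4*(i:ℤ) := by exact_mod_cast hri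
      omega
  obtain ⟨za, hza, hza4⟩ := spin_int ha (n-1) le_rfl
  have hza' : ya (n-1) = (za:ℝ) := by rw [hyda]; exact hza
  have hyna : (pt a n).2 = ((za+1:ℤ):ℝ) + ε := by
    rw [← hyda n]
    push_cast
    linarith [halast', hza']
  have hzav : za = k + 2*n - 2*i - 2 := by
    by_cases hmem : (2*(n:ℝ)-1, ((za+1:ℤ):ℝ) - ε) ∈ a ++ b.reverse
    · rcases Bi_x_mid ha hb hmem rfl with hq | hq
      · exfalso
        have hv := congrArg Prod.snd hq
        dsimp only at hv
        rw [hyna] at hv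
        linarith
      · have hv := congrArg Prod.snd hq
        dsimp only at hv
        rw [← hydb n, hybnv] at hv
        have : ((za:ℤ):ℝ) = ((k + 2*n - 2*i - 2 : ℤ):ℝ) := by push_cast at hv ⊢; linarith
        exact_mod_cast this
    · exfalso
      have hcmem : ((n, za+1) : ℕ × ℤ) ∈ Cp (.B n ε) (a ++ b.reverse) false := by
        refine ⟨Or.inl ⟨rfl, by omega⟩, Or.inr ⟨rfl, ?_⟩⟩
        show (2*(n:ℝ) - 1, ((za+1:ℤ):ℝ) + ε) ∈ a ++ b.reverse ∧
          (2*(n:ℝ) - 1, ((za+1:ℤ):ℝ) - ε) ∉ a ++ b.reverse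
        constructor
        · have heq : (2*(n:ℝ)-1, ((za+1:ℤ):ℝ)+ε) = pt a n := (Prod.ext haxn hyna).symm
          rw [heq, ← hpa n le_rfl]
          exact pt_mem (by rw [hlen2]; omega)
        · exact hmem
      rw [hC] at hcmem
      exact hcmem
  rw [← hyda i]
  rcases chain_Q (c := 2) (by norm_num) hstepa
    (fun t h1 h2 => nomax_a t h1 (by omega)) i (by omega) with h | h
  · rw [h, hya0]
    push_cast
    ring
  · have hs := sum_up (c := 2) (y := ya) (m := n-1) i (n-1) (by omega) le_rfl h
    rw [hza', hzav] at hs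
    have hc : ((n-1 : ℕ):ℝ) = (n:ℝ) - 1 := by
      push_cast [Nat.cast_sub (show 1 ≤ n by omega)]; ring
    rw [hc] at hs
    push_cast at hs
    linarith

lemma Bi_highmem {n i : ℕ} {ε : ℝ} {k : ℤ} {a b : List (ℝ × ℝ)}
    (hin : i < n)
    (ha : a ∈ pathsBspin n ε (laZ n i k)) (hb : b ∈ pathsBspin n ε (lbZ n i k))
    (hyi : (pt a i).2 = (k:ℝ)) :
    ((((if laZ n i k % 4 = 3 then 2*(i:ℤ) else 4*(n:ℤ) - 2 - 2*(i:ℤ)) : ℤ) : ℝ), (k:ℝ)) ∈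
      a ++ b.reverse := by
  obtain ⟨ha1, hax, -, -, -, -⟩ := spin_struct ha
  obtain ⟨hb1, -, -, -, -, -⟩ := spin_struct hb
  have hx : (pt a i).1 =
      (((if laZ n i k % 4 = 3 then 2*(i:ℤ) else 4*(n:ℤ) - 2 - 2*(i:ℤ)) : ℤ) : ℝ) := by
    rw [hax i hin]
    by_cases h3 : laZ n i k % 4 = 3
    · rw [if_pos h3, if_pos h3]; push_cast; ring
    · rw [if_neg h3, if_neg h3]; push_cast; ring
  have he : pt (a ++ b.reverse) i =
      ((((if laZ n i k % 4 = 3 then 2*(i:ℤ) else 4*(n:ℤ) - 2 - 2*(i:ℤ)) : ℤ) : ℝ), (k:ℝ)) := by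
    rw [pt_append_left (by omega)]
    exact Prod.ext hx hyi
  rw [← he]
  exact pt_mem (by rw [concat_length ha1 hb1]; omega)

lemma A_yi {n i : ℕ} {k : ℤ} {p : List (ℝ × ℝ)} (hp : p ∈ pathsA n i k)
    (hmem : ((i:ℝ), (k:ℝ)) ∈ p) : (pt p i).2 = (k:ℝ) := by
  obtain ⟨r, hrlen, hr⟩ := mem_pt hmem
  have hx := hp.2.1 r (by rw [← hp.1]; exact hrlen)
  rw [hr] at hx
  simp only at hx
  have hri : r = i := by exact_mod_cast hx.symm
  rw [← hri, hr]


/-- For each `(i,k) ∈ X` there exists exactly one path in `𝒫_{i,k}` with no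
lower corners (the highest path `p⁺_{i,k}`); moreover a path of `𝒫_{i,k}` has no lower
corners iff it contains the distinguished point (`(i,k)` in type A; `ι(i,k)` in type B when
`i < N`; `(2N-1, k-ε)` in type B when `i = N`) — hence `p⁺_{i,k}` is also the unique path
containing that point. -/
theorem stmt0 (S : Setting) (hS : S.valid) (i : ℕ) (k : ℤ) (hik : (i, k) ∈ X S) :
    (∃! p, p ∈ P S i k ∧ Cp S p false = ∅) ∧
    (∀ p ∈ P S i k, (Cp S p false = ∅ ↔ highPoint S i k ∈ p)) := by
  cases S with
  | A n =>
    obtain ⟨hi1, hin, -⟩ := hik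
    have hHP : highPoint (.A n) i k = ((i:ℝ), (k:ℝ)) := rfl
    have hhm := pHighA_mem n i k hi1 hin
    have hhyi : (pt (pHighA n i k) i).2 = (k:ℝ) := by
      rw [pHighA_pt n i k (by omega)]
      simp [yA]
    constructor
    · refine ⟨pHighA n i k, ⟨hhm, A_noCorner hhm hi1 hin hhyi⟩, ?_⟩
      rintro q ⟨hq, hqc⟩
      exact A_eq_high hq hin (A_yi hq (A_contains hq hi1 hin hqc))
    · intro p hp
      rw [hHP]
      exact ⟨fun hc => A_contains hp hi1 hin hc,
        fun hm => A_noCorner hp hi1 hin (A_yi hp hm)⟩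
  | B n ε =>
    obtain ⟨hn2, hε, hε2⟩ := hS
    by_cases hin : i = n
    · subst hin
      have hk : k % 2 = 1 := by
        rcases hik with ⟨-, hk⟩ | ⟨-, hlt, -⟩
        · exact hk
        · omega
      have hP : P (.B i ε) i k = pathsBspin i ε k := by
        show pathsB i ε i k = _
        rw [pathsB, if_pos rfl]
      have hHP : highPoint (.B i ε) i k = (2*(i:ℝ) - 1, (k:ℝ) - ε) := by
        show (if i = i then _ else _) = _
        rw [if_pos rfl]
      rw [hP, hHP]
      constructor
      · refine ⟨pHighBspin i ε k, ⟨pHighBspin_mem hn2 k, ?_⟩, ?_⟩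
        · exact Bn_noCorner hn2 hε hε2 (pHighBspin_mem hn2 k) (Bn_highmem ε k hn2)
        · rintro q ⟨hq, hqc⟩
          exact Bn_eq_high hn2 hε hq (Bn_contains hn2 hε hε2 hk hq hqc)
      · intro p hp
        exact ⟨fun hc => Bn_contains hn2 hε hε2 hk hp hc,
          fun hm => Bn_noCorner hn2 hε hε2 hp hm⟩
    · -- non-spin node
      have hik' : 1 ≤ i ∧ i < n ∧ k % 2 = 0 := by
        rcases hik with ⟨he, -⟩ | h
        · exact absurd he hin
        · exact h
      obtain ⟨hi1, hiln, hk⟩ := hik'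
      have hHP : highPoint (.B n ε) i k =
          ((((if laZ n i k % 4 = 3 then 2*(i:ℤ) else 4*(n:ℤ) - 2 - 2*(i:ℤ)) : ℤ) : ℝ),
            (k:ℝ)) := by
        show (if i = n then ((2*(n:ℝ) - 1, (k:ℝ) - ε)) else
          (((iotaB n (i, k)).1 : ℝ), ((iotaB n (i, k)).2 : ℝ))) = _
        rw [if_neg hin, iotaB_ik hin]
      have hP : P (.B n ε) i k = pathsB n ε i k := rfl
      rw [hP, hHP]
      constructor
      · have hmemH := pHighBi_mem (k := k) hn2 hi1 hiln hε
        have hyiH : (pt (legAHigh n i ε k) i).2 = (k:ℝ) := by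
          rw [legAHigh_pt ε k (by omega), if_neg (by omega)]
          dsimp only
          rw [yABv, if_pos le_rfl]
          ring
        have habH : 0 < (pt (legAHigh n i ε k) n).2 -
            (pt (pHighBspin n ε (lbZ n i k)) n).2 := by
          rw [legAHigh_pt ε k (by omega), if_pos rfl, pHighBspin_pt _ _ (by omega),
            if_pos rfl]
          dsimp only
          simp only [lbZ]
          push_cast
          linarith
        have hCH : Cp (.B n ε) (pHighBi n i ε k) false = ∅ := by
          show Cp (.B n ε) (legAHigh n i ε k ++ (pHighBspin n ε (lbZ n i k)).reverse)
            false = ∅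
          exact Bi_noCorner hn2 hi1 hiln hε hε2 (legAHigh_mem hi1 hiln)
            (pHighBspin_mem hn2 _) habH hyiH
        refine ⟨pHighBi n i ε k, ⟨hmemH, hCH⟩, ?_⟩
        rintro q ⟨hq, hqc⟩
        obtain ⟨a, b, ha, hb, rfl, hab⟩ := Bi_struct hin hq
        exact Bi_eq_high hn2 hi1 hiln hε hε2 ha hb hab
          (Bi_contains hn2 hi1 hiln hε hε2 hk ha hb hab hqc)
      · intro p hp
        obtain ⟨a, b, ha, hb, rfl, hab⟩ := Bi_struct hin hp
        constructor
        · intro hc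
          exact Bi_highmem hiln ha hb
            (Bi_contains hn2 hi1 hiln hε hε2 hk ha hb hab hc)
        · intro hm
          have hq := Bi_index hi1 hiln hk ha hb hm rfl
          have hyi : (pt a i).2 = (k:ℝ) := by
            have h2 := congrArg Prod.snd hq
            dsimp only at h2
            exact h2.symm
          exact Bi_noCorner hn2 hi1 hiln hε hε2 ha hb hab hyi

end Paper
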